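/- arXiv:2603.27009 — 7 statements merged into one kernel-verified Lean document; each statement's English description precedes it below -/
import Mathlib

section
/- The Hilbert distance on the interior of a bounded convex open set Ω in the plane, defined for distinct points p, q as (1/2)·log of the cross-ratio of the chord endpoints, is a metric: it is nonnegative, zero iff p = q, symmetric, and satisfies the triangle inequality. -/
noncomputable section
open Classical

abbrev V2 := EuclideanSpace ℝ (Fin 2)

namespace HilbertAux

lemma seg_param {x b a : V2} (h : a ∈ openSegment ℝ x b) :
    ∃ s : ℝ, 0 < s ∧ s < 1 ∧ a = s • x + (1 - s) • b := by
  obtain ⟨u, v, hu, hv, huv, he⟩ := h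
  exact ⟨u, hu, by linarith, by rw [show (1:ℝ) - u = v by linarith, he]⟩

lemma dist_head {x b : V2} {s : ℝ} (hs : s ≤ 1) :
    dist x (s • x + (1 - s) • b) = (1 - s) * dist x b := by
  rw [dist_eq_norm, dist_eq_norm]
  have h : x - (s • x + (1 - s) • b) = (1 - s) • (x - b) := by module
  rw [h, norm_smul, Real.norm_eq_abs, abs_of_nonneg (by linarith : (0:ℝ) ≤ 1 - s)]

lemma dist_head' {y p : V2} {u : ℝ} (hu : 0 ≤ u) :
    dist y (u • p + (1 - u) • y) = u * dist y p := by
  rw [dist_eq_norm, dist_eq_norm]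
  have h : y - (u • p + (1 - u) • y) = u • (y - p) := by module
  rw [h, norm_smul, Real.norm_eq_abs, abs_of_nonneg hu]

lemma funk_key {Ω : Set V2} (f : V2 →L[ℝ] ℝ) {c : ℝ} (hf : ∀ z ∈ Ω, f z < c)
    {x a b : V2} (hx : x ∈ closure Ω) (ha : a ∈ openSegment ℝ x b) :
    (c - f b) * dist x a ≤ (c - f a) * dist x b := by
  have hxc : f x ≤ c := by
    have hsub : closure Ω ⊆ f ⁻¹' Set.Iic c :=
      closure_minimal (fun z hz => le_of_lt (hf z hz)) (isClosed_Iic.preimage f.continuous)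
    exact hsub hx
  obtain ⟨s, hs0, hs1, rfl⟩ := seg_param ha
  have hxa := dist_head (b := b) (x := x) hs1.le
  have hfa : f (s • x + (1 - s) • b) = s * f x + (1 - s) * f b := by
    simp [map_add, map_smul, smul_eq_mul]
  rw [hxa, hfa]
  nlinarith [dist_nonneg (x := x) (y := b), mul_nonneg hs0.le (sub_nonneg.2 hxc)]

lemma funk_eq (f : V2 →L[ℝ] ℝ) {c : ℝ} {x a b : V2} (hc : f x = c)
    (ha : a ∈ openSegment ℝ x b) :
    (c - f b) * dist x a = (c - f a) * dist x b := by
  obtain ⟨s, hs0, hs1, rfl⟩ := seg_param ha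
  have hxa := dist_head (b := b) (x := x) hs1.le
  have hfa : f (s • x + (1 - s) • b) = s * f x + (1 - s) * f b := by
    simp [map_add, map_smul, smul_eq_mul]
  rw [hxa, hfa, hc]
  ring

lemma exists_chord {Ω : Set V2} (hΩo : IsOpen Ω) (hΩb : Bornology.IsBounded Ω)
    {p q : V2} (hp : p ∈ Ω) (hq : q ∈ Ω) (hpq : p ≠ q) :
    ∃ x, x ∈ frontier Ω ∧ p ∈ openSegment ℝ x q := by
  set g : ℝ → V2 := fun t => q + t • (p - q) with hg
  have hgc : Continuous g := continuous_const.add (continuous_id.smul continuous_const)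
  set S : Set ℝ := g ⁻¹' closure Ω with hS
  have hScl : IsClosed S := isClosed_closure.preimage hgc
  have hg1 : g 1 = p := by simp [hg]
  have h1S : (1:ℝ) ∈ S := by
    simp only [hS, Set.mem_preimage, hg1]; exact subset_closure hp
  have hpqn : (0:ℝ) < ‖p - q‖ := by
    rw [norm_pos_iff]; exact sub_ne_zero.2 hpq
  have hBdd : BddAbove S := by
    obtain ⟨M, hM⟩ := isBounded_iff_forall_norm_le.1 hΩb.closure
    refine ⟨(M + ‖q‖) / ‖p - q‖, fun t ht => ?_⟩
    have h1 : ‖g t‖ ≤ M := hM _ ht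
    have h2 : |t| * ‖p - q‖ ≤ M + ‖q‖ := by
      calc |t| * ‖p - q‖ = ‖t • (p - q)‖ := by rw [norm_smul, Real.norm_eq_abs]
        _ = ‖g t - q‖ := by simp [hg]
        _ ≤ ‖g t‖ + ‖q‖ := norm_sub_le _ _
        _ ≤ M + ‖q‖ := by linarith
    have := (le_div_iff₀ hpqn).2 h2
    exact le_trans (le_abs_self t) this
  set t₀ := sSup S with ht₀
  have ht₀S : t₀ ∈ S := hScl.csSup_mem ⟨1, h1S⟩ hBdd
  have key : ∀ t, g t ∈ Ω → ∃ ε > 0, t + ε ∈ S := by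
    intro t ht
    have hnh : g ⁻¹' Ω ∈ nhds t := (hΩo.preimage hgc).mem_nhds ht
    obtain ⟨ε, hε, hball⟩ := Metric.mem_nhds_iff.1 hnh
    refine ⟨ε/2, by linarith, ?_⟩
    have hmem : t + ε/2 ∈ g ⁻¹' Ω := by
      apply hball
      simp only [Metric.mem_ball, Real.dist_eq]
      rw [abs_of_nonneg (by linarith : (0:ℝ) ≤ t + ε/2 - t)]
      linarith
    exact Set.mem_preimage.2 (subset_closure hmem)
  have h1lt : 1 < t₀ := by
    obtain ⟨ε, hε, hmem⟩ := key 1 (by rw [hg1]; exact hp)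
    have := le_csSup hBdd hmem
    linarith
  have hxΩ : g t₀ ∉ Ω := by
    intro h
    obtain ⟨ε, hε, hmem⟩ := key t₀ h
    have := le_csSup hBdd hmem
    linarith
  have ht0 : t₀ ≠ 0 := by positivity
  refine ⟨g t₀, ⟨ht₀S, by rwa [hΩo.interior_eq]⟩, ?_⟩
  refine ⟨1/t₀, 1 - 1/t₀, by positivity, ?_, by ring, ?_⟩
  · have : 1/t₀ < 1 := by
      rw [div_lt_one (by linarith : (0:ℝ) < t₀)]; exact h1lt
    linarith
  · show (1/t₀) • g t₀ + (1 - 1/t₀) • q = p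
    simp only [hg]
    match_scalars <;> (field_simp; try ring)

lemma chord_unique {Ω : Set V2} (hΩo : IsOpen Ω) (hΩc : Convex ℝ Ω)
    {q x x' p : V2} (hq : q ∈ Ω) (hx : x ∈ frontier Ω) (hx' : x' ∈ frontier Ω)
    (h1 : p ∈ openSegment ℝ x q) (h2 : p ∈ openSegment ℝ x' q) : x = x' := by
  have key : ∀ {y y' : V2} {u : ℝ}, y ∈ frontier Ω → y' ∈ frontier Ω → 0 < u → u ≤ 1 →
      y' - q = u • (y - q) → y' = y := by
    intro y y' u hy hy' hu hu1 hrel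
    rcases eq_or_lt_of_le hu1 with rfl | hu1
    · exact sub_left_inj.1 (by rw [hrel, one_smul])
    · exfalso
      have hmem : y' = (1 - u) • q + u • y := by
        have h := sub_eq_iff_eq_add.1 hrel
        rw [h]; module
      have hint : y' ∈ interior Ω := by
        rw [hmem]
        exact hΩc.combo_interior_closure_mem_interior (by rwa [hΩo.interior_eq]) hy.1
          (by linarith) hu.le (by ring)
      exact hy'.2 hint
  obtain ⟨s, hs0, hs1, he⟩ := seg_param h1
  obtain ⟨s', hs0', hs1', he'⟩ := seg_param h2
  have hd : s • (x - q) = s' • (x' - q) := by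
    have h := he.symm.trans he'
    have h2' : s • x + (1 - s) • q - q = s' • x' + (1 - s') • q - q := by rw [h]
    calc s • (x - q) = s • x + (1 - s) • q - q := by module
      _ = s' • x' + (1 - s') • q - q := h2'
      _ = s' • (x' - q) := by module
  rcases le_total s' s with hle | hle
  · refine key hx' hx (by positivity) ((div_le_one hs0).2 hle) ?_
    rw [div_eq_mul_inv, mul_comm, mul_smul, ← hd, smul_smul, inv_mul_cancel₀ hs0.ne',
      one_smul]
  · refine (key hx hx' (by positivity) ((div_le_one hs0').2 hle) ?_).symm
    rw [div_eq_mul_inv, mul_comm, mul_smul, hd, smul_smul, inv_mul_cancel₀ hs0'.ne',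
      one_smul]


lemma funk_triangle {Ω : Set V2} (hΩo : IsOpen Ω) (hΩc : Convex ℝ Ω)
    {p q r x u v : V2} (hp : p ∈ Ω) (hq : q ∈ Ω) (hr : r ∈ Ω)
    (hx : x ∈ frontier Ω) (h1 : p ∈ openSegment ℝ x r)
    (hu : u ∈ frontier Ω) (h2 : p ∈ openSegment ℝ u q)
    (hv : v ∈ frontier Ω) (h3 : q ∈ openSegment ℝ v r) :
    dist x r / dist x p ≤ (dist u q / dist u p) * (dist v r / dist v q) := by
  have hdist_pos : ∀ {w z : V2}, w ∈ frontier Ω → z ∈ Ω → 0 < dist w z := by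
    intro w z hw hz
    rw [dist_pos]
    rintro rfl
    exact hw.2 (by rw [hΩo.interior_eq]; exact hz)
  obtain ⟨f, hf⟩ := geometric_hahn_banach_open_point hΩc hΩo
    (fun h => hx.2 (by rw [hΩo.interior_eq]; exact h))
  set c := f x with hc
  have hcp : 0 < c - f p := sub_pos.2 (hf p hp)
  have hcq : 0 < c - f q := sub_pos.2 (hf q hq)
  have hcr : 0 < c - f r := sub_pos.2 (hf r hr)
  have e1 : (c - f r) * dist x p = (c - f p) * dist x r := funk_eq f rfl h1
  have i2 : (c - f q) * dist u p ≤ (c - f p) * dist u q := funk_key f hf hu.1 h2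
  have i3 : (c - f r) * dist v q ≤ (c - f q) * dist v r := funk_key f hf hv.1 h3
  have d1 : 0 < dist x p := hdist_pos hx hp
  have d2 : 0 < dist u p := hdist_pos hu hp
  have d3 : 0 < dist v q := hdist_pos hv hq
  rw [div_mul_div_comm, div_le_div_iff₀ d1 (mul_pos d2 d3)]
  -- goal : dist x r * (dist u p * dist v q) ≤ dist u q * dist v r * dist x p
  have prod : ((c - f q) * dist u p) * ((c - f r) * dist v q) ≤
      ((c - f p) * dist u q) * ((c - f q) * dist v r) :=
    mul_le_mul i2 i3 (mul_nonneg hcr.le dist_nonneg) (mul_nonneg hcp.le dist_nonneg)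
  have step : dist x p * (((c - f q) * dist u p) * ((c - f r) * dist v q)) ≤
      dist x p * (((c - f p) * dist u q) * ((c - f q) * dist v r)) :=
    mul_le_mul_of_nonneg_left prod dist_nonneg
  have g2 : ((c - f p) * (c - f q)) * (dist x r * (dist u p * dist v q)) ≤
      ((c - f p) * (c - f q)) * (dist u q * dist v r * dist x p) := by
    calc ((c - f p) * (c - f q)) * (dist x r * (dist u p * dist v q))
        = dist x p * (((c - f q) * dist u p) * ((c - f r) * dist v q)) := by
          linear_combination (c - f q) * dist u p * dist v q * e1.symm
      _ ≤ dist x p * (((c - f p) * dist u q) * ((c - f q) * dist v r)) := step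
      _ = ((c - f p) * (c - f q)) * (dist u q * dist v r * dist x p) := by ring
  exact le_of_mul_le_mul_left g2 (mul_pos hcp hcq)


end HilbertAux

open HilbertAux

/-- The Hilbert distance on `Ω`: for distinct `p q` with chord endpoints `x`
(beyond `p`) and `y` (beyond `q`) on the frontier of `Ω`, it is
`(1/2) * log ((‖x−q‖·‖y−p‖)/(‖x−p‖·‖y−q‖))`; otherwise `0`. -/
noncomputable def hilbertDist (Ω : Set V2) (p q : V2) : ℝ :=
  if h : ∃ x y : V2, x ∈ frontier Ω ∧ y ∈ frontier Ω ∧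
      p ∈ openSegment ℝ x q ∧ q ∈ openSegment ℝ p y then
    (1/2) * Real.log ((dist h.choose q * dist h.choose_spec.choose p) /
      (dist h.choose p * dist h.choose_spec.choose q))
  else 0

namespace HilbertAux

lemma hilbertDist_eq {Ω : Set V2} (hΩo : IsOpen Ω) (hΩc : Convex ℝ Ω)
    {p q x y : V2} (hp : p ∈ Ω) (hq : q ∈ Ω)
    (hx : x ∈ frontier Ω) (hy : y ∈ frontier Ω)
    (hpx : p ∈ openSegment ℝ x q) (hqy : q ∈ openSegment ℝ p y) :
    hilbertDist Ω p q =
      (1/2) * Real.log ((dist x q * dist y p) / (dist x p * dist y q)) := by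
  have hex : ∃ x y : V2, x ∈ frontier Ω ∧ y ∈ frontier Ω ∧
      p ∈ openSegment ℝ x q ∧ q ∈ openSegment ℝ p y := ⟨x, y, hx, hy, hpx, hqy⟩
  rw [hilbertDist, dif_pos hex]
  obtain ⟨hx', hy', hpx', hqy'⟩ := hex.choose_spec.choose_spec
  have ex : hex.choose = x := chord_unique hΩo hΩc hq hx' hx hpx' hpx
  have ey : hex.choose_spec.choose = y := by
    rw [openSegment_symm] at hqy' hqy
    exact chord_unique hΩo hΩc hp hy' hy hqy' hqy
  rw [ey, ex]

end HilbertAux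

/-- The Hilbert distance on an open bounded convex set `Ω ⊂ ℝ²` is a metric. -/
theorem hilbertDist_is_metric (Ω : Set V2) (hΩo : IsOpen Ω) (hΩb : Bornology.IsBounded Ω)
    (hΩc : Convex ℝ Ω) (hne : Ω.Nonempty) :
    (∀ p ∈ Ω, ∀ q ∈ Ω, 0 ≤ hilbertDist Ω p q) ∧
    (∀ p ∈ Ω, ∀ q ∈ Ω, (hilbertDist Ω p q = 0 ↔ p = q)) ∧
    (∀ p ∈ Ω, ∀ q ∈ Ω, hilbertDist Ω p q = hilbertDist Ω q p) ∧
    (∀ p ∈ Ω, ∀ q ∈ Ω, ∀ r ∈ Ω,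
      hilbertDist Ω p r ≤ hilbertDist Ω p q + hilbertDist Ω q r) := by
  have hdist_pos : ∀ {w z : V2}, w ∈ frontier Ω → z ∈ Ω → 0 < dist w z := by
    intro w z hw hz
    rw [dist_pos]
    rintro rfl
    exact hw.2 (by rw [hΩo.interior_eq]; exact hz)
  have chord : ∀ p ∈ Ω, ∀ q ∈ Ω, p ≠ q → ∃ x y : V2, x ∈ frontier Ω ∧ y ∈ frontier Ω ∧
      p ∈ openSegment ℝ x q ∧ q ∈ openSegment ℝ p y := by
    intro p hp q hq hpq
    obtain ⟨x, hx, hpx⟩ := HilbertAux.exists_chord hΩo hΩb hp hq hpq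
    obtain ⟨y, hy, hqy⟩ := HilbertAux.exists_chord hΩo hΩb hq hp hpq.symm
    exact ⟨x, y, hx, hy, hpx, by rwa [openSegment_symm] at hqy⟩
  have hself : ∀ p ∈ Ω, hilbertDist Ω p p = 0 := by
    intro p hp
    rw [hilbertDist, dif_neg]
    rintro ⟨x, y, hx, hy, hpx, -⟩
    obtain ⟨u, v, hu, hv, huv, he⟩ := hpx
    have hxp : x = p := by
      have h1 : u • x = u • p := by
        have h2 : u • x = p - v • p := eq_sub_of_add_eq he
        rw [h2, show p - v • p = (1-v) • p by rw [sub_smul, one_smul],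
          show (1:ℝ) - v = u by linarith]
      exact smul_right_injective V2 hu.ne' h1
    subst hxp
    exact hx.2 (by rw [hΩo.interior_eq]; exact hp)
  have hpos : ∀ p ∈ Ω, ∀ q ∈ Ω, p ≠ q → 0 < hilbertDist Ω p q := by
    intro p hp q hq hpq
    obtain ⟨x, y, hx, hy, hpx, hqy⟩ := chord p hp q hq hpq
    rw [HilbertAux.hilbertDist_eq hΩo hΩc hp hq hx hy hpx hqy]
    have Dx : 0 < dist x q := hdist_pos hx hq
    have Dy : 0 < dist y p := hdist_pos hy hp
    obtain ⟨s, hs0, hs1, hep⟩ := HilbertAux.seg_param hpx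
    obtain ⟨u, hu0, hu1, heq⟩ := HilbertAux.seg_param hqy
    have e1 : dist x p = (1 - s) * dist x q := by
      rw [hep]; exact HilbertAux.dist_head hs1.le
    have e2 : dist y q = u * dist y p := by
      rw [dist_comm y q, heq, dist_comm]
      exact HilbertAux.dist_head' hu0.le
    have h01 : (1 - s) * u < 1 := by nlinarith
    have hnum : dist x p * dist y q < dist x q * dist y p := by
      rw [e1, e2]
      calc (1 - s) * dist x q * (u * dist y p) = ((1 - s) * u) * (dist x q * dist y p) := by
            ring
        _ < 1 * (dist x q * dist y p) := mul_lt_mul_of_pos_right h01 (mul_pos Dx Dy)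
        _ = dist x q * dist y p := one_mul _
    have hdenpos : 0 < dist x p * dist y q :=
      mul_pos (hdist_pos hx hp) (hdist_pos hy hq)
    have hR : 1 < (dist x q * dist y p) / (dist x p * dist y q) :=
      (one_lt_div hdenpos).2 hnum
    have := Real.log_pos hR
    linarith
  have hnonneg : ∀ p ∈ Ω, ∀ q ∈ Ω, 0 ≤ hilbertDist Ω p q := by
    intro p hp q hq
    by_cases hpq : p = q
    · subst hpq; rw [hself p hp]
    · exact (hpos p hp q hq hpq).le
  refine ⟨hnonneg, ?_, ?_, ?_⟩
  · intro p hp q hq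
    constructor
    · intro h
      by_contra hpq
      exact absurd h (hpos p hp q hq hpq).ne'
    · rintro rfl; exact hself p hp
  · intro p hp q hq
    by_cases hpq : p = q
    · subst hpq; rfl
    · obtain ⟨x, y, hx, hy, hpx, hqy⟩ := chord p hp q hq hpq
      rw [HilbertAux.hilbertDist_eq hΩo hΩc hp hq hx hy hpx hqy,
        HilbertAux.hilbertDist_eq hΩo hΩc hq hp hy hx
          (by rwa [openSegment_symm] at hqy) (by rwa [openSegment_symm] at hpx)]
      rw [mul_comm (dist y p) (dist x q), mul_comm (dist y q) (dist x p)]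
  · intro p hp q hq r hr
    by_cases hpq : p = q
    · subst hpq; rw [hself p hp]; linarith
    by_cases hqr : q = r
    · subst hqr; rw [hself q hq]; linarith
    by_cases hpr : p = r
    · subst hpr
      rw [hself p hp]
      exact add_nonneg (hnonneg p hp q hq) (hnonneg q hq p hp)
    obtain ⟨xpq, xqp, hxpq, hxqp, hpq1, hpq2⟩ := chord p hp q hq hpq
    obtain ⟨xqr, xrq, hxqr, hxrq, hqr1, hqr2⟩ := chord q hq r hr hqr
    obtain ⟨xpr, xrp, hxpr, hxrp, hpr1, hpr2⟩ := chord p hp r hr hpr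
    rw [HilbertAux.hilbertDist_eq hΩo hΩc hp hr hxpr hxrp hpr1 hpr2,
      HilbertAux.hilbertDist_eq hΩo hΩc hp hq hxpq hxqp hpq1 hpq2,
      HilbertAux.hilbertDist_eq hΩo hΩc hq hr hxqr hxrq hqr1 hqr2]
    have A : dist xpr r / dist xpr p ≤
        (dist xpq q / dist xpq p) * (dist xqr r / dist xqr q) :=
      HilbertAux.funk_triangle hΩo hΩc hp hq hr hxpr hpr1 hxpq hpq1 hxqr hqr1
    have B : dist xrp p / dist xrp r ≤
        (dist xrq q / dist xrq r) * (dist xqp p / dist xqp q) :=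
      HilbertAux.funk_triangle hΩo hΩc hr hq hp hxrp
        (by rwa [openSegment_symm] at hpr2) hxrq
        (by rwa [openSegment_symm] at hqr2) hxqp
        (by rwa [openSegment_symm] at hpq2)
    have dposA : 0 < dist xpr p := hdist_pos hxpr hp
    have dposA' : 0 < dist xpr r := hdist_pos hxpr hr
    have dposB : 0 < dist xrp r := hdist_pos hxrp hr
    have dposB' : 0 < dist xrp p := hdist_pos hxrp hp
    have dpq1 : 0 < dist xpq p := hdist_pos hxpq hp
    have dpq2 : 0 < dist xpq q := hdist_pos hxpq hq
    have dqp1 : 0 < dist xqp p := hdist_pos hxqp hp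
    have dqp2 : 0 < dist xqp q := hdist_pos hxqp hq
    have dqr1 : 0 < dist xqr q := hdist_pos hxqr hq
    have dqr2 : 0 < dist xqr r := hdist_pos hxqr hr
    have drq1 : 0 < dist xrq q := hdist_pos hxrq hq
    have drq2 : 0 < dist xrq r := hdist_pos hxrq hr
    have hprod : (dist xpr r * dist xrp p) / (dist xpr p * dist xrp r) ≤
        ((dist xpq q * dist xqp p) / (dist xpq p * dist xqp q)) *
        ((dist xqr r * dist xrq q) / (dist xqr q * dist xrq r)) := by
      have hmul := mul_le_mul A B
        (div_nonneg dist_nonneg dist_nonneg)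
        (by positivity)
      calc (dist xpr r * dist xrp p) / (dist xpr p * dist xrp r)
          = (dist xpr r / dist xpr p) * (dist xrp p / dist xrp r) := by
            rw [div_mul_div_comm]
        _ ≤ ((dist xpq q / dist xpq p) * (dist xqr r / dist xqr q)) *
            ((dist xrq q / dist xrq r) * (dist xqp p / dist xqp q)) := hmul
        _ = ((dist xpq q * dist xqp p) / (dist xpq p * dist xqp q)) *
            ((dist xqr r * dist xrq q) / (dist xqr q * dist xrq r)) := by
            field_simp
    have hLpos : 0 < (dist xpr r * dist xrp p) / (dist xpr p * dist xrp r) := by positivity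
    have hR1pos : 0 < (dist xpq q * dist xqp p) / (dist xpq p * dist xqp q) := by positivity
    have hR2pos : 0 < (dist xqr r * dist xrq q) / (dist xqr q * dist xrq r) := by positivity
    have hlog := Real.log_le_log hLpos hprod
    rw [Real.log_mul hR1pos.ne' hR2pos.ne'] at hlog
    linarith
end
end

section
/- For the Hilbert metric on an open bounded convex set Ω, any three collinear points p, q, r with q strictly between p and r satisfy d_Ω(p,r) = d_Ω(p,q) + d_Ω(q,r); that is, straight line segments are geodesics in the Hilbert metric. -/
noncomputable section
open Classical

lemma mem_openSegment_param (c : V2) {v : V2} {a s b : ℝ} (h₁ : a < s) (h₂ : s < b) :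
    c + s • v ∈ openSegment ℝ (c + a • v) (c + b • v) := by
  have hba : b - a ≠ 0 := by linarith
  refine ⟨(b - s) / (b - a), (s - a) / (b - a),
    div_pos (by linarith) (by linarith), div_pos (by linarith) (by linarith), ?_, ?_⟩
  · field_simp
    ring
  · match_scalars <;> field_simp <;> ring

lemma endpoint_param {p q y : V2} (h : q ∈ openSegment ℝ p y) :
    ∃ t : ℝ, 0 < t ∧ y = p + t • (q - p) := by
  obtain ⟨a, b, ha, hb, hab, hc⟩ := h
  refine ⟨1 / b, by positivity, ?_⟩
  have ha' : a = 1 - b := by linarith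
  subst ha'
  rw [← hc]
  match_scalars <;> field_simp <;> ring

lemma ray_param_unique (Ω : Set V2) (hΩo : IsOpen Ω) (hΩc : Convex ℝ Ω) {c v : V2}
    (hc : c ∈ Ω) : ∀ {t t' : ℝ}, 0 < t → 0 < t' →
    c + t • v ∈ frontier Ω → c + t' • v ∈ frontier Ω → t = t' := by
  have key : ∀ {t t' : ℝ}, 0 < t → t < t' → c + t' • v ∈ frontier Ω →
      c + t • v ∉ frontier Ω := by
    intro t t' ht htt' hf' hf
    have hseg : c + t • v ∈ openSegment ℝ c (c + t' • v) := by
      simpa using mem_openSegment_param c (a := 0) ht htt'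
    have hint : c + t • v ∈ interior Ω :=
      hΩc.openSegment_interior_closure_subset_interior
        (by rw [hΩo.interior_eq]; exact hc) (frontier_subset_closure hf') hseg
    rw [hΩo.frontier_eq] at hf
    exact hf.2 (by rwa [hΩo.interior_eq] at hint)
  intro t t' ht ht' hf hf'
  rcases lt_trichotomy t t' with h | h | h
  · exact absurd hf (key ht h hf')
  · exact h
  · exact absurd hf' (key ht' h hf)

lemma exists_frontier_ray (Ω : Set V2) (hΩo : IsOpen Ω) (hΩb : Bornology.IsBounded Ω)
    {c v : V2} (hc : c ∈ Ω) (hv : v ≠ 0) : ∃ t : ℝ, 0 < t ∧ c + t • v ∈ frontier Ω := by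
  have hvpos : 0 < ‖v‖ := norm_pos_iff.mpr hv
  set g : ℝ → V2 := fun t => c + t • v with hg
  have hgc : Continuous g := continuous_const.add (continuous_id.smul continuous_const)
  set T : Set ℝ := g ⁻¹' closure Ω with hT
  have hTc : IsClosed T := isClosed_closure.preimage hgc
  have hT0 : (0 : ℝ) ∈ T := by
    show g 0 ∈ closure Ω
    simpa [hg] using subset_closure hc
  obtain ⟨R, hR⟩ := hΩb.closure.subset_closedBall 0
  have hbdd : BddAbove T := by
    refine ⟨(R + ‖c‖) / ‖v‖, fun t ht => ?_⟩
    have h1 : ‖g t‖ ≤ R := by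
      have := hR ht
      simpa [Metric.mem_closedBall, dist_zero_right] using this
    have h2 : |t| * ‖v‖ ≤ R + ‖c‖ := by
      have : ‖t • v‖ = ‖g t - c‖ := by simp [hg]
      rw [norm_smul, Real.norm_eq_abs] at this
      have h3 : ‖g t - c‖ ≤ ‖g t‖ + ‖c‖ := norm_sub_le _ _
      linarith [this ▸ h3]
    exact le_trans (le_abs_self t) ((le_div_iff₀ hvpos).mpr h2)
  set S := sSup T with hS
  have hST : S ∈ T := hTc.csSup_mem ⟨0, hT0⟩ hbdd
  have hnot : g S ∉ Ω := by
    intro hmem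
    have hnhd : g ⁻¹' Ω ∈ nhds S := (hΩo.preimage hgc).mem_nhds hmem
    obtain ⟨ε, hε, hball⟩ := Metric.mem_nhds_iff.mp hnhd
    have hmem2 : S + ε / 2 ∈ T := by
      have : S + ε / 2 ∈ Metric.ball S ε := by
        rw [Metric.mem_ball, Real.dist_eq, show S + ε / 2 - S = ε / 2 by ring,
          abs_of_pos (by linarith)]
        linarith
      exact subset_closure (hball this)
    have := le_csSup hbdd hmem2
    linarith
  have hSpos : 0 < S := by
    have hnhd : g ⁻¹' Ω ∈ nhds 0 := by
      refine (hΩo.preimage hgc).mem_nhds ?_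
      show g 0 ∈ Ω
      simpa [hg] using hc
    obtain ⟨ε, hε, hball⟩ := Metric.mem_nhds_iff.mp hnhd
    have hmem2 : ε / 2 ∈ T := by
      have : ε / 2 ∈ Metric.ball (0 : ℝ) ε := by
        rw [Metric.mem_ball, Real.dist_eq, sub_zero, abs_of_pos (by linarith)]
        linarith
      exact subset_closure (hball this)
    have := le_csSup hbdd hmem2
    linarith
  refine ⟨S, hSpos, ?_⟩
  rw [hΩo.frontier_eq]
  exact ⟨hST, hnot⟩

lemma hilbertDist_eq (Ω : Set V2) (hΩo : IsOpen Ω) (hΩc : Convex ℝ Ω) {p q x y : V2}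
    (hp : p ∈ Ω) (hq : q ∈ Ω) (hx : x ∈ frontier Ω) (hy : y ∈ frontier Ω)
    (hpx : p ∈ openSegment ℝ x q) (hqy : q ∈ openSegment ℝ p y) :
    hilbertDist Ω p q = (1/2) * Real.log ((dist x q * dist y p) / (dist x p * dist y q)) := by
  have h : ∃ x y : V2, x ∈ frontier Ω ∧ y ∈ frontier Ω ∧
      p ∈ openSegment ℝ x q ∧ q ∈ openSegment ℝ p y := ⟨x, y, hx, hy, hpx, hqy⟩
  rw [hilbertDist, dif_pos h]
  obtain ⟨hx', hy', hpx', hqy'⟩ := h.choose_spec.choose_spec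
  have hxeq : h.choose = x := by
    have hpx2 : p ∈ openSegment ℝ q x := (openSegment_symm ℝ x q) ▸ hpx
    have hpx2' : p ∈ openSegment ℝ q h.choose := (openSegment_symm ℝ _ q) ▸ hpx'
    obtain ⟨t, ht, hte⟩ := endpoint_param hpx2
    obtain ⟨t', ht', hte'⟩ := endpoint_param hpx2'
    have := ray_param_unique Ω hΩo hΩc hq ht' ht (hte' ▸ hx') (hte ▸ hx)
    rw [hte', hte, this]
  have hyeq : h.choose_spec.choose = y := by
    obtain ⟨t, ht, hte⟩ := endpoint_param hqy
    obtain ⟨t', ht', hte'⟩ := endpoint_param hqy'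
    have := ray_param_unique Ω hΩo hΩc hp ht' ht (hte' ▸ hy') (hte ▸ hy)
    rw [hte', hte, this]
  rw [hyeq, hxeq]

lemma hilbertDist_self (Ω : Set V2) (hΩo : IsOpen Ω) {p : V2} (hp : p ∈ Ω) :
    hilbertDist Ω p p = 0 := by
  rw [hilbertDist, dif_neg]
  rintro ⟨x, y, hx, -, hpx, -⟩
  have hpx2 : p ∈ openSegment ℝ p x := (openSegment_symm ℝ x p) ▸ hpx
  obtain ⟨t, ht, hte⟩ := endpoint_param hpx2
  simp only [sub_self, smul_zero, add_zero] at hte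
  rw [hΩo.frontier_eq, hte] at hx
  exact hx.2 hp


/-- Straight segments are geodesics for the Hilbert metric. -/
theorem hilbertDist_add_of_between (Ω : Set V2) (hΩo : IsOpen Ω)
    (hΩb : Bornology.IsBounded Ω) (hΩc : Convex ℝ Ω)
    (p q r : V2) (hp : p ∈ Ω) (hq : q ∈ Ω) (hr : r ∈ Ω)
    (hbtw : q ∈ openSegment ℝ p r) :
    hilbertDist Ω p r = hilbertDist Ω p q + hilbertDist Ω q r := by
  by_cases hpr : p = r
  · subst hpr
    rw [openSegment_same] at hbtw
    rw [Set.mem_singleton_iff] at hbtw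
    subst hbtw
    rw [hilbertDist_self Ω hΩo hp]
    ring
  · have hv : r - p ≠ 0 := sub_ne_zero.mpr (Ne.symm hpr)
    set v : V2 := r - p with hv_def
    obtain ⟨s, hs0, hs1, hq_eq⟩ : ∃ s : ℝ, 0 < s ∧ s < 1 ∧ p + s • v = q := by
      obtain ⟨a, b, ha, hb, hab, hcomb⟩ := hbtw
      refine ⟨b, hb, by linarith, ?_⟩
      rw [← hcomb, hv_def]
      have ha' : a = 1 - b := by linarith
      subst ha'
      match_scalars <;> ring
    obtain ⟨α, hα, hxf2⟩ : ∃ α : ℝ, α < 0 ∧ p + α • v ∈ frontier Ω := by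
      obtain ⟨tx, htx, hxf⟩ := exists_frontier_ray Ω hΩo hΩb hp (v := p - r) (by
        rw [← neg_sub]; exact neg_ne_zero.mpr hv)
      refine ⟨-tx, by linarith, ?_⟩
      rw [show p + (-tx) • v = p + tx • (p - r) by rw [hv_def]; module]
      exact hxf
    obtain ⟨β, hβ, hyf2⟩ : ∃ β : ℝ, 1 < β ∧ p + β • v ∈ frontier Ω := by
      obtain ⟨ty, hty, hyf⟩ := exists_frontier_ray Ω hΩo hΩb hr (v := r - p) hv
      refine ⟨1 + ty, by linarith, ?_⟩
      rw [show p + (1 + ty) • v = r + ty • (r - p) by rw [hv_def]; module]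
      exact hyf
    have hp0 : p + (0 : ℝ) • v = p := by simp
    have hr1 : p + (1 : ℝ) • v = r := by rw [hv_def]; module
    have m1 : p ∈ openSegment ℝ (p + α • v) r := by
      have h := mem_openSegment_param p (v := v) (a := α) (s := 0) (b := 1) hα zero_lt_one
      rwa [hp0, hr1] at h
    have m2 : r ∈ openSegment ℝ p (p + β • v) := by
      have h := mem_openSegment_param p (v := v) (a := 0) (s := 1) (b := β) zero_lt_one hβ
      rwa [hp0, hr1] at h
    have m3 : p ∈ openSegment ℝ (p + α • v) q := by
      have h := mem_openSegment_param p (v := v) (a := α) (s := 0) (b := s) hα hs0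
      rwa [hp0, hq_eq] at h
    have m4 : q ∈ openSegment ℝ p (p + β • v) := by
      have h := mem_openSegment_param p (v := v) (a := 0) (s := s) (b := β) hs0 (by linarith)
      rwa [hp0, hq_eq] at h
    have m5 : q ∈ openSegment ℝ (p + α • v) r := by
      have h := mem_openSegment_param p (v := v) (a := α) (s := s) (b := 1) (by linarith) hs1
      rwa [hq_eq, hr1] at h
    have m6 : r ∈ openSegment ℝ q (p + β • v) := by
      have h := mem_openSegment_param p (v := v) (a := s) (s := 1) (b := β) hs1 hβ
      rwa [hq_eq, hr1] at h
    rw [hilbertDist_eq Ω hΩo hΩc hp hr hxf2 hyf2 m1 m2,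
        hilbertDist_eq Ω hΩo hΩc hp hq hxf2 hyf2 m3 m4,
        hilbertDist_eq Ω hΩo hΩc hq hr hxf2 hyf2 m5 m6]
    have hL : 0 < ‖v‖ := norm_pos_iff.mpr hv
    set L : ℝ := ‖v‖ with hL_def
    have dist_eq : ∀ c d : ℝ, dist (p + c • v) (p + d • v) = |c - d| * L := by
      intro c d
      rw [dist_eq_norm, show p + c • v - (p + d • v) = (c - d) • v by module,
        norm_smul, Real.norm_eq_abs, hL_def]
    have dist_eq' : ∀ c : ℝ, dist (p + c • v) p = |c| * L := by
      intro c
      rw [dist_eq_norm, show p + c • v - p = c • v by module,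
        norm_smul, Real.norm_eq_abs, hL_def]
    have dxq : dist (p + α • v) q = (s - α) * L := by
      rw [← hq_eq, dist_eq, abs_of_neg (by linarith), neg_sub]
    have dyp : dist (p + β • v) p = β * L := by
      rw [dist_eq', abs_of_pos (by linarith)]
    have dxp : dist (p + α • v) p = -α * L := by
      rw [dist_eq', abs_of_neg hα]
    have dyq : dist (p + β • v) q = (β - s) * L := by
      rw [← hq_eq, dist_eq, abs_of_pos (by linarith)]
    have dxr : dist (p + α • v) r = (1 - α) * L := by
      rw [← hr1, dist_eq, abs_of_neg (by linarith), neg_sub]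
    have dyr : dist (p + β • v) r = (β - 1) * L := by
      rw [← hr1, dist_eq, abs_of_pos (by linarith)]
    rw [dxq, dyp, dxp, dyq, dxr, dyr]
    have hLne : L ≠ 0 := hL.ne'
    have hαne : α ≠ 0 := hα.ne
    have hβsne : β - s ≠ 0 := by intro h; nlinarith [h]
    have hsαne : s - α ≠ 0 := by intro h; nlinarith [h]
    have hβ1ne : β - 1 ≠ 0 := by intro h; nlinarith [h]
    have hB : 0 < (s - α) * L * (β * L) / (-α * L * ((β - s) * L)) :=
      div_pos (mul_pos (mul_pos (by linarith) hL) (mul_pos (by linarith) hL))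
        (mul_pos (mul_pos (by linarith) hL) (mul_pos (by linarith) hL))
    have hC : 0 < (1 - α) * L * ((β - s) * L) / ((s - α) * L * ((β - 1) * L)) :=
      div_pos (mul_pos (mul_pos (by linarith) hL) (mul_pos (by linarith) hL))
        (mul_pos (mul_pos (by linarith) hL) (mul_pos (by linarith) hL))
    have key : (1 - α) * L * (β * L) / (-α * L * ((β - 1) * L)) =
        ((s - α) * L * (β * L) / (-α * L * ((β - s) * L))) *
        ((1 - α) * L * ((β - s) * L) / ((s - α) * L * ((β - 1) * L))) := by
      field_simp
    rw [key, Real.log_mul hB.ne' hC.ne']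
    ring
end
end

section
/- Closed balls in the Hilbert metric on an open bounded convex set Ω are convex subsets of ℝ². -/
noncomputable section
open Classical

set_option linter.unusedSectionVars false
set_option linter.unreachableTactic false
set_option linter.unusedTactic false
set_option linter.unnecessarySeqFocus false

def hShift (Ω : Set V2) (c : V2) : Set V2 := (fun v => c + v) ⁻¹' Ω

section basic
variable {Ω : Set V2} {c : V2}

lemma hShift_mem {v : V2} : v ∈ hShift Ω c ↔ c + v ∈ Ω := Iff.rfl

lemma hShift_isOpen (h : IsOpen Ω) : IsOpen (hShift Ω c) :=
  h.preimage (continuous_const.add continuous_id)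

lemma hShift_convex (h : Convex ℝ Ω) : Convex ℝ (hShift Ω c) := by
  intro x hx y hy a b ha hb hab
  have key := h (x := c + x) (y := c + y) hx hy ha hb hab
  have heq : a • (c + x) + b • (c + y) = (a + b) • c + (a • x + b • y) := by module
  rw [heq, hab, one_smul] at key
  exact key

lemma hShift_frontier {v : V2} : v ∈ frontier (hShift Ω c) ↔ c + v ∈ frontier Ω := by
  have h2 := (Homeomorph.addLeft c).preimage_frontier Ω
  have : hShift Ω c = (Homeomorph.addLeft c) ⁻¹' Ω := rfl
  rw [this, ← h2]; rfl

lemma hShift_bounded (h : Bornology.IsBounded Ω) : Bornology.IsBounded (hShift Ω c) := by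
  obtain ⟨R, hR⟩ := h.subset_closedBall c
  apply Metric.isBounded_closedBall (x := (0 : V2)) (r := R) |>.subset
  intro v hv
  have := hR hv
  simp only [Metric.mem_closedBall] at this ⊢
  simpa [dist_eq_norm, add_sub_cancel_left] using this

variable (hΩo : IsOpen Ω) (hΩb : Bornology.IsBounded Ω) (hΩc : Convex ℝ Ω) (hc : c ∈ Ω)
include hc

lemma hShift_zero_mem : (0 : V2) ∈ hShift Ω c := by simpa [hShift_mem]

include hΩo hΩc

lemma hShift_absorbent : Absorbent ℝ (hShift Ω c) :=
  absorbent_nhds_zero ((hShift_isOpen hΩo).mem_nhds (hShift_zero_mem hc))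

/-- membership in Ω via gauge -/
lemma gauge_lt_one_iff_mem' {p : V2} :
    p ∈ Ω ↔ gauge (hShift Ω c) (p - c) < 1 := by
  constructor
  · intro hp
    exact gauge_lt_one_of_mem_of_isOpen (hShift_isOpen hΩo)
      (hShift_mem.mpr (by simpa using hp))
  · intro h
    have := (gauge_lt_one_eq_self_of_isOpen (hShift_convex hΩc) (hShift_zero_mem hc)
      (hShift_isOpen hΩo)) ▸ h
    have : (p - c) ∈ hShift Ω c := by
      rw [← gauge_lt_one_eq_self_of_isOpen (hShift_convex hΩc) (hShift_zero_mem hc)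
        (hShift_isOpen hΩo)]
      exact h
    simpa [hShift_mem] using this

lemma gauge_pos' {v : V2} (hv : v ≠ 0) (hΩb : Bornology.IsBounded Ω) :
    0 < gauge (hShift Ω c) v :=
  (gauge_pos (hShift_absorbent hΩo hΩc hc)
    ((NormedSpace.isVonNBounded_iff ℝ).mpr (hShift_bounded hΩb))).mpr hv

/-- frontier points on a ray from `c` -/
lemma frontier_ray {d : V2} {t : ℝ} (ht : 0 ≤ t)
    (hf : c + t • d ∈ frontier Ω) : t * gauge (hShift Ω c) d = 1 := by
  have h1 : (t • d) ∈ frontier (hShift Ω c) := hShift_frontier.mpr hf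
  have h2 := (gauge_eq_one_iff_mem_frontier (hShift_convex hΩc)
    ((hShift_isOpen hΩo).mem_nhds (hShift_zero_mem hc))).mpr h1
  rwa [gauge_smul_of_nonneg ht, smul_eq_mul] at h2

lemma mem_frontier_of_gauge_eq_one' {d : V2} {t : ℝ} (ht : 0 ≤ t)
    (hg : t * gauge (hShift Ω c) d = 1) : c + t • d ∈ frontier Ω := by
  rw [← hShift_frontier]
  exact (gauge_eq_one_iff_mem_frontier (hShift_convex hΩc)
    ((hShift_isOpen hΩo).mem_nhds (hShift_zero_mem hc))).mp
    (by rwa [gauge_smul_of_nonneg ht, smul_eq_mul])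

end basic

section formula
variable {Ω : Set V2} {c : V2}
variable (hΩo : IsOpen Ω) (hΩb : Bornology.IsBounded Ω) (hΩc : Convex ℝ Ω) (hc : c ∈ Ω)
include hΩo hΩb hΩc hc

lemma hilbert_formula {p : V2} (hp : p ∈ Ω) (hne : p ≠ c) :
    hilbertDist Ω c p = (1/2) * Real.log
      ((1 + gauge (hShift Ω c) (c - p)) / (1 - gauge (hShift Ω c) (p - c))) := by
  set s := hShift Ω c with hs
  set a := gauge s (p - c) with hadef
  set b := gauge s (c - p) with hbdef
  have hvne : p - c ≠ 0 := sub_ne_zero.mpr hne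
  have hvne' : c - p ≠ 0 := sub_ne_zero.mpr (Ne.symm hne)
  have ha0 : 0 < a := gauge_pos' hΩo hΩc hc hvne hΩb
  have hb0 : 0 < b := gauge_pos' hΩo hΩc hc hvne' hΩb
  have ha1 : a < 1 := (gauge_lt_one_iff_mem' hΩo hΩc hc).mp hp
  set x₀ : V2 := c + b⁻¹ • (c - p) with hx₀
  set y₀ : V2 := c + a⁻¹ • (p - c) with hy₀
  have hx₀f : x₀ ∈ frontier Ω :=
    mem_frontier_of_gauge_eq_one' hΩo hΩc hc (le_of_lt (inv_pos.mpr hb0))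
      (by rw [← hbdef]; field_simp)
  have hy₀f : y₀ ∈ frontier Ω :=
    mem_frontier_of_gauge_eq_one' hΩo hΩc hc (le_of_lt (inv_pos.mpr ha0))
      (by rw [← hadef]; field_simp)
  have hcseg : c ∈ openSegment ℝ x₀ p := by
    refine ⟨b / (1 + b), 1 / (1 + b), by positivity, by positivity, ?_, ?_⟩
    · field_simp; try ring
    · rw [hx₀]
      match_scalars <;> (try field_simp) <;> (try linarith) <;> (try ring)
  have hpseg : p ∈ openSegment ℝ c y₀ := by
    refine ⟨1 - a, a, by linarith, ha0, by ring, ?_⟩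
    rw [hy₀]
    match_scalars <;> (try field_simp) <;> (try linarith) <;> (try ring)
  have hE : ∃ x y : V2, x ∈ frontier Ω ∧ y ∈ frontier Ω ∧
      c ∈ openSegment ℝ x p ∧ p ∈ openSegment ℝ c y :=
    ⟨x₀, y₀, hx₀f, hy₀f, hcseg, hpseg⟩
  -- uniqueness of the two frontier points
  have hux : ∀ x : V2, x ∈ frontier Ω → c ∈ openSegment ℝ x p → x = x₀ := by
    rintro x hxf ⟨t₁, t₂, ht₁, ht₂, h12, heq⟩
    have hxval : x = c + (t₂ / t₁) • (c - p) := by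
      have h3 : t₁ • x = c - t₂ • p := eq_sub_of_add_eq heq
      have h4 : t₁ • (c + (t₂ / t₁) • (c - p)) = c - t₂ • p := by
        match_scalars <;> (try field_simp) <;> (try linarith) <;> (try ring)
      exact smul_right_injective V2 (ne_of_gt ht₁) (h3.trans h4.symm)
    have hray : (t₂ / t₁) * b = 1 := by
      rw [hbdef, hs]
      exact frontier_ray hΩo hΩc hc (le_of_lt (div_pos ht₂ ht₁)) (hxval ▸ hxf)
    have : t₂ / t₁ = b⁻¹ := by field_simp at hray ⊢; linarith
    rw [hxval, this, hx₀]
  have huy : ∀ y : V2, y ∈ frontier Ω → p ∈ openSegment ℝ c y → y = y₀ := by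
    rintro y hyf ⟨t₁, t₂, ht₁, ht₂, h12, heq⟩
    have hyval : y = c + t₂⁻¹ • (p - c) := by
      have h3 : t₂ • y = p - t₁ • c := by
        rw [← heq]; module
      have h4 : t₂ • (c + t₂⁻¹ • (p - c)) = p - t₁ • c := by
        match_scalars <;> (try field_simp) <;> (try linarith) <;> (try ring)
      exact smul_right_injective V2 (ne_of_gt ht₂) (h3.trans h4.symm)
    have hray : t₂⁻¹ * a = 1 := by
      rw [hadef, hs]
      exact frontier_ray hΩo hΩc hc (le_of_lt (inv_pos.mpr ht₂)) (hyval ▸ hyf)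
    have : t₂⁻¹ = a⁻¹ := by field_simp at hray ⊢; linarith
    rw [hyval, this, hy₀]
  rw [hilbertDist, dif_pos hE]
  obtain ⟨hf1, hf2, hs1, hs2⟩ := hE.choose_spec.choose_spec
  have hxeq : hE.choose = x₀ := hux _ hf1 hs1
  have hyeq : hE.choose_spec.choose = y₀ := huy _ hf2 hs2
  set n : ℝ := ‖c - p‖ with hn
  have hn0 : 0 < n := norm_pos_iff.mpr hvne'
  have hnorm_rev : ‖p - c‖ = n := norm_sub_rev p c
  have d1 : dist x₀ p = (b⁻¹ + 1) * n := by
    rw [dist_eq_norm, hx₀]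
    have : c + b⁻¹ • (c - p) - p = (b⁻¹ + 1) • (c - p) := by module
    rw [this, norm_smul, Real.norm_eq_abs, abs_of_pos (by positivity)]
  have d2 : dist x₀ c = b⁻¹ * n := by
    rw [dist_eq_norm, hx₀]
    have : c + b⁻¹ • (c - p) - c = b⁻¹ • (c - p) := by module
    rw [this, norm_smul, Real.norm_eq_abs, abs_of_pos (by positivity)]
  have d3 : dist y₀ c = a⁻¹ * n := by
    rw [dist_eq_norm, hy₀]
    have : c + a⁻¹ • (p - c) - c = a⁻¹ • (p - c) := by module
    rw [this, norm_smul, Real.norm_eq_abs, abs_of_pos (by positivity), hnorm_rev]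
  have d4 : dist y₀ p = (a⁻¹ - 1) * n := by
    rw [dist_eq_norm, hy₀]
    have : c + a⁻¹ • (p - c) - p = (a⁻¹ - 1) • (p - c) := by module
    have ha' : (1 : ℝ) < a⁻¹ := (one_lt_inv₀ ha0).mpr ha1
    rw [this, norm_smul, Real.norm_eq_abs, abs_of_pos (by linarith), hnorm_rev]
  have D1 : dist hE.choose p = (b⁻¹ + 1) * n := by rw [hxeq]; exact d1
  have D2 : dist hE.choose c = b⁻¹ * n := by rw [hxeq]; exact d2
  have D3 : dist hE.choose_spec.choose c = a⁻¹ * n := by rw [hyeq]; exact d3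
  have D4 : dist hE.choose_spec.choose p = (a⁻¹ - 1) * n := by rw [hyeq]; exact d4
  rw [D1, D2, D3, D4]
  have h1a : (0:ℝ) < 1 - a := by linarith
  have hinv : (0:ℝ) < a⁻¹ - 1 := by
    have := (one_lt_inv₀ ha0).mpr ha1; linarith
  have hq2 : (0:ℝ) < b⁻¹ * n * ((a⁻¹ - 1) * n) :=
    mul_pos (mul_pos (inv_pos.mpr hb0) hn0) (mul_pos hinv hn0)
  have harg : (b⁻¹ + 1) * n * (a⁻¹ * n) / (b⁻¹ * n * ((a⁻¹ - 1) * n))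
      = (1 + b) / (1 - a) := by
    rw [div_eq_div_iff (ne_of_gt hq2) (ne_of_gt h1a)]
    field_simp
  rw [harg]
end formula

lemma hilbertDist_self_zero {Ω : Set V2} {c : V2} (hΩo : IsOpen Ω) (hc : c ∈ Ω) :
    hilbertDist Ω c c = 0 := by
  rw [hilbertDist, dif_neg]
  rintro ⟨x, y, hx, -, hcx, -⟩
  obtain ⟨t₁, t₂, ht₁, ht₂, h12, heq⟩ := hcx
  have hxc : x = c := by
    have h1 : t₁ • x = t₁ • c := by
      have h2 : t₁ • x = c - t₂ • c := eq_sub_of_add_eq heq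
      rw [h2]; match_scalars; linarith
    exact smul_right_injective V2 (ne_of_gt ht₁) h1
  rw [hxc, hΩo.frontier_eq] at hx
  exact hx.2 hc


/-- Closed Hilbert balls are convex subsets of the plane. -/
theorem hilbert_closedBall_convex (Ω : Set V2) (hΩo : IsOpen Ω)
    (hΩb : Bornology.IsBounded Ω) (hΩc : Convex ℝ Ω)
    (c : V2) (hc : c ∈ Ω) (r : ℝ) (hr : 0 ≤ r) :
    Convex ℝ {p ∈ Ω | hilbertDist Ω c p ≤ r} := by
  set s := hShift Ω c with hs
  set K := Real.exp (2 * r) with hK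
  have hK1 : 1 ≤ K := Real.one_le_exp (by linarith)
  have hK0 : 0 < K := by linarith
  have habs : Absorbent ℝ s := hShift_absorbent hΩo hΩc hc
  have hsc : Convex ℝ s := hShift_convex hΩc
  have hset : {p ∈ Ω | hilbertDist Ω c p ≤ r}
      = {p : V2 | gauge s (c - p) + K * gauge s (p - c) ≤ K - 1} := by
    ext p
    simp only [Set.mem_sep_iff, Set.mem_setOf_eq]
    constructor
    · rintro ⟨hp, hd⟩
      by_cases hne : p = c
      · subst hne
        simp only [sub_self, gauge_zero, mul_zero, add_zero]
        linarith
      · rw [hilbert_formula hΩo hΩb hΩc hc hp hne] at hd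
        set a := gauge s (p - c) with hadef
        set b := gauge s (c - p) with hbdef
        have ha1 : a < 1 := (gauge_lt_one_iff_mem' hΩo hΩc hc).mp hp
        have hb0 : (0:ℝ) ≤ b := gauge_nonneg _
        have h1a : (0:ℝ) < 1 - a := by linarith
        have hpos : (0:ℝ) < (1 + b) / (1 - a) := by positivity
        have hlog : Real.log ((1 + b) / (1 - a)) ≤ 2 * r := by linarith
        have hle := (Real.log_le_iff_le_exp hpos).mp hlog
        rw [div_le_iff₀ h1a] at hle
        nlinarith
    · intro hF
      have h0b : (0:ℝ) ≤ gauge s (c - p) := gauge_nonneg _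
      have ha' : gauge s (p - c) < 1 := by
        by_contra h
        push_neg at h
        have : K ≤ K * gauge s (p - c) := le_mul_of_one_le_right (le_of_lt hK0) h
        linarith
      have hp : p ∈ Ω := (gauge_lt_one_iff_mem' hΩo hΩc hc).mpr ha'
      refine ⟨hp, ?_⟩
      by_cases hne : p = c
      · subst hne
        rw [hilbertDist_self_zero hΩo hc]
        exact hr
      · rw [hilbert_formula hΩo hΩb hΩc hc hp hne]
        set a := gauge s (p - c) with hadef
        set b := gauge s (c - p) with hbdef
        have h1a : (0:ℝ) < 1 - a := by linarith
        have hpos : (0:ℝ) < (1 + b) / (1 - a) := by positivity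
        have hle : (1 + b) / (1 - a) ≤ K := by
          rw [div_le_iff₀ h1a]
          nlinarith
        have := (Real.log_le_iff_le_exp hpos).mpr (by rwa [← hK])
        linarith
  rw [hset]
  intro p hp q hq α β hα hβ hαβ
  simp only [Set.mem_setOf_eq] at hp hq ⊢
  have key : ∀ u w : V2, gauge s (α • u + β • w) ≤ α * gauge s u + β * gauge s w := by
    intro u w
    calc gauge s (α • u + β • w) ≤ gauge s (α • u) + gauge s (β • w) :=
          gauge_add_le hsc habs _ _
      _ = α * gauge s u + β * gauge s w := by
          rw [gauge_smul_of_nonneg hα, gauge_smul_of_nonneg hβ, smul_eq_mul, smul_eq_mul]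
  have e1 : c - (α • p + β • q) = α • (c - p) + β • (c - q) := by
    match_scalars <;> linarith
  have e2 : (α • p + β • q) - c = α • (p - c) + β • (q - c) := by
    match_scalars <;> linarith
  have h1 := key (c - p) (c - q)
  rw [← e1] at h1
  have h2 := key (p - c) (q - c)
  rw [← e2] at h2
  have h3 : K * gauge s ((α • p + β • q) - c)
      ≤ K * (α * gauge s (p - c) + β * gauge s (q - c)) :=
    mul_le_mul_of_nonneg_left h2 (le_of_lt hK0)
  have m1 : α * (gauge s (c - p) + K * gauge s (p - c)) ≤ α * (K - 1) :=
    mul_le_mul_of_nonneg_left hp hα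
  have m2 : β * (gauge s (c - q) + K * gauge s (q - c)) ≤ β * (K - 1) :=
    mul_le_mul_of_nonneg_left hq hβ
  have hKαβ : α * K + β * K = K := by rw [← add_mul, hαβ, one_mul]
  nlinarith
end
end

section
/- For any point c in an open bounded convex set Ω and any r ≥ 0, the closed Hilbert ball B(c,r) is a compact subset of Ω; in particular, the Hilbert metric space (Ω, d_Ω) is proper. -/
noncomputable section
open Classical

open Metric Filter Topology

/-- The complement of a bounded set is nonempty. -/
lemma hb_compl_nonempty {Ω : Set V2} (hΩb : Bornology.IsBounded Ω) : Ωᶜ.Nonempty := by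
  obtain ⟨R, hR⟩ := hΩb.subset_closedBall 0
  refine ⟨EuclideanSpace.single 0 (|R| + 1), fun h => ?_⟩
  have := hR h
  rw [Metric.mem_closedBall, dist_zero_right, EuclideanSpace.norm_single] at this
  have : |(|R| + 1)| ≤ R := this
  rw [abs_of_pos (by positivity)] at this
  have := le_abs_self R
  linarith

/-- Points of an open set are not on the frontier. -/
lemma frontier_not_mem {Ω : Set V2} (hΩo : IsOpen Ω) {x : V2} (hx : x ∈ frontier Ω) :
    x ∉ Ω := by
  rw [hΩo.frontier_eq] at hx
  exact hx.2

lemma infDist_pos_of_mem {Ω : Set V2} (hΩo : IsOpen Ω) (hΩb : Bornology.IsBounded Ω)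
    {m : V2} (hm : m ∈ Ω) : 0 < infDist m Ωᶜ := by
  rw [← hΩo.isClosed_compl.notMem_iff_infDist_pos (hb_compl_nonempty hΩb)]
  simpa using hm

lemma ball_infDist_subset {Ω : Set V2} {m : V2} : Metric.ball m (infDist m Ωᶜ) ⊆ Ω := by
  intro z hz
  by_contra hzc
  have h1 : infDist m Ωᶜ ≤ dist m z := infDist_le_dist_of_mem hzc
  rw [Metric.mem_ball, dist_comm] at hz
  linarith

/-- Extending a segment inside an open bounded convex set to the frontier. -/
lemma exists_frontier_ext {Ω : Set V2} (hΩo : IsOpen Ω) (hΩb : Bornology.IsBounded Ω)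
    (hΩc : Convex ℝ Ω) {a b : V2} (ha : a ∈ Ω) (hb : b ∈ Ω) (hab : a ≠ b) :
    ∃ y ∈ frontier Ω, b ∈ openSegment ℝ a y := by
  set f : ℝ → V2 := fun t => a + t • (b - a) with hf
  have hfc : Continuous f := by fun_prop
  set T : Set ℝ := {t : ℝ | 0 ≤ t ∧ f t ∈ Ω} with hT
  have hbne : (0:ℝ) < ‖b - a‖ := by
    rw [norm_pos_iff, sub_ne_zero]; exact fun h => hab h.symm
  obtain ⟨R, hR⟩ := hΩb.subset_closedBall 0
  have hbddT : BddAbove T := by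
    refine ⟨(R + ‖a‖) / ‖b - a‖, fun t ht => ?_⟩
    have h1 : ‖f t‖ ≤ R := by simpa [dist_zero_right] using hR ht.2
    have h2 : ‖t • (b - a)‖ ≤ ‖f t‖ + ‖a‖ := by
      have : t • (b - a) = f t - a := by simp [hf]
      rw [this]
      exact norm_sub_le_of_le le_rfl le_rfl |>.trans (by simp [add_comm])
    rw [norm_smul, Real.norm_eq_abs] at h2
    have h3 : t ≤ |t| := le_abs_self t
    rw [le_div_iff₀ hbne]
    nlinarith [abs_nonneg t]
  have h1T : (1:ℝ) ∈ T := ⟨zero_le_one, by simp [hf, hb]⟩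
  have hTne : T.Nonempty := ⟨1, h1T⟩
  set t₀ := sSup T with ht₀
  have ht₀ge : 1 ≤ t₀ := le_csSup hbddT h1T
  -- the preimage of Ω under f is open; so t₀ > 1
  have hpre : IsOpen (f ⁻¹' Ω) := hΩo.preimage hfc
  have ht₀gt : 1 < t₀ := by
    have h1 : (1:ℝ) ∈ f ⁻¹' Ω := by simp [hf, hb]
    obtain ⟨ε, hε, hball⟩ := Metric.isOpen_iff.mp hpre 1 h1
    have : 1 + ε/2 ∈ T := by
      constructor
      · positivity
      · refine hball ?_
        rw [Metric.mem_ball, Real.dist_eq, show (1 + ε/2 - 1) = ε/2 by ring,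
          abs_of_pos (by positivity)]
        linarith
    have := le_csSup hbddT this
    linarith
  have ht₀pos : 0 < t₀ := by linarith
  -- every t in [0, t₀) is in T
  have hIoo : ∀ t, 0 ≤ t → t < t₀ → f t ∈ Ω := by
    intro t ht0 htlt
    obtain ⟨s, hsT, hts⟩ := exists_lt_of_lt_csSup hTne htlt
    have hspos : 0 < s := lt_of_le_of_lt ht0 hts
    have hcomb : f t = (1 - t/s) • a + (t/s) • f s := by
      have hs0 : s ≠ 0 := hspos.ne'
      simp only [hf]
      match_scalars <;> field_simp <;> ring
    rw [hcomb]
    have h1 : 0 ≤ 1 - t/s := by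
      rw [sub_nonneg, div_le_one hspos]; exact hts.le
    have h2 : 0 ≤ t/s := by positivity
    exact hΩc ha hsT.2 h1 h2 (by ring)
  -- f t₀ ∈ closure Ω
  have hclos : f t₀ ∈ closure Ω := by
    rw [Metric.mem_closure_iff]
    intro ε hε
    set t := max 0 (t₀ - ε / (2 * ‖b - a‖)) with htdef
    have htlt : t < t₀ := by
      rw [htdef]
      apply max_lt ht₀pos
      have : 0 < ε / (2 * ‖b - a‖) := by positivity
      linarith
    have htmem : f t ∈ Ω := hIoo t (le_max_left _ _) htlt
    refine ⟨f t, htmem, ?_⟩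
    have hd : dist (f t₀) (f t) = |t₀ - t| * ‖b - a‖ := by
      simp only [hf, dist_eq_norm]
      rw [show a + t₀ • (b - a) - (a + t • (b - a)) = (t₀ - t) • (b - a) by module]
      rw [norm_smul, Real.norm_eq_abs]
    rw [hd, abs_of_pos (by linarith)]
    have h1 : t₀ - t ≤ ε / (2 * ‖b - a‖) := by
      rw [htdef]
      have := le_max_right 0 (t₀ - ε / (2 * ‖b - a‖))
      linarith
    calc (t₀ - t) * ‖b - a‖ ≤ ε / (2 * ‖b - a‖) * ‖b - a‖ := by
          apply mul_le_mul_of_nonneg_right h1 (norm_nonneg _)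
      _ = ε / 2 := by field_simp
      _ < ε := by linarith
  -- f t₀ ∉ Ω
  have hnotmem : f t₀ ∉ Ω := by
    intro hmem
    obtain ⟨ε, hε, hball⟩ := Metric.isOpen_iff.mp hpre t₀ hmem
    have : t₀ + ε/2 ∈ T := by
      constructor
      · positivity
      · refine hball ?_
        rw [Metric.mem_ball, Real.dist_eq, show (t₀ + ε/2 - t₀) = ε/2 by ring,
          abs_of_pos (by positivity)]
        linarith
    have := le_csSup hbddT this
    linarith
  refine ⟨f t₀, ?_, ?_⟩
  · rw [hΩo.frontier_eq]; exact ⟨hclos, hnotmem⟩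
  · refine ⟨1 - 1/t₀, 1/t₀, by rw [sub_pos, div_lt_one ht₀pos]; exact ht₀gt,
      by positivity, by ring, ?_⟩
    have ht0' : t₀ ≠ 0 := ht₀pos.ne'
    simp only [hf]
    match_scalars <;> field_simp <;> ring

/-- Uniqueness of the frontier point of a chord through an interior point. -/
lemma frontier_unique {Ω : Set V2} (hΩo : IsOpen Ω) (hΩc : Convex ℝ Ω) {m w x₁ x₂ : V2}
    (hm : m ∈ Ω) (h₁ : x₁ ∈ frontier Ω) (h₂ : x₂ ∈ frontier Ω)
    (hs₁ : m ∈ openSegment ℝ x₁ w) (hs₂ : m ∈ openSegment ℝ x₂ w) : x₁ = x₂ := by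
  have key : ∀ x₁' x₂' : V2, x₁' ∈ frontier Ω → x₂' ∈ frontier Ω →
      ∀ a₁ b₁ a₂ b₂ : ℝ, 0 < a₁ → 0 < b₁ → 0 < a₂ → 0 < b₂ → a₁ + b₁ = 1 → a₂ + b₂ = 1 →
      a₁ • x₁' + b₁ • w = m → a₂ • x₂' + b₂ • w = m → a₁ < a₂ → False := by
    intro x₁' x₂' h₁' h₂' a₁ b₁ a₂ b₂ ha₁ hb₁ ha₂ hb₂ hab₁ hab₂ e₁ e₂ hlt
    have hb1 : b₁ = 1 - a₁ := by linarith
    have hb2 : b₂ = 1 - a₂ := by linarith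
    subst hb1 hb2
    have E2 : ((1-a₂)*a₁) • x₁' + (a₂ - a₁) • m = ((1-a₁)*a₂) • x₂' := by
      linear_combination (norm := module) (1-a₂) • e₁ - (1-a₁) • e₂
    have hspos : 0 < (1-a₁) * a₂ := by positivity
    have hx₂eq : x₂' = ((a₂ - a₁)/((1-a₁)*a₂)) • m + (((1-a₂)*a₁)/((1-a₁)*a₂)) • x₁' := by
      apply smul_right_injective V2 hspos.ne'
      show ((1-a₁)*a₂) • x₂' = ((1-a₁)*a₂) • _
      rw [← E2, smul_add, smul_smul, smul_smul,
        show (1-a₁)*a₂ * ((a₂ - a₁)/((1-a₁)*a₂)) = a₂ - a₁ by field_simp,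
        show (1-a₁)*a₂ * (((1-a₂)*a₁)/((1-a₁)*a₂)) = (1-a₂)*a₁ by field_simp]
      abel
    have hsum : (a₂ - a₁)/((1-a₁)*a₂) + ((1-a₂)*a₁)/((1-a₁)*a₂) = 1 := by
      field_simp
      ring
    have hmem : x₂' ∈ interior Ω := by
      rw [hx₂eq]
      exact hΩc.combo_interior_closure_mem_interior
        (by rwa [hΩo.interior_eq]) (frontier_subset_closure h₁')
        (div_pos (by linarith) hspos)
        (le_of_lt (div_pos (by positivity) hspos)) hsum
    rw [hΩo.interior_eq] at hmem
    exact frontier_not_mem hΩo h₂' hmem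
  obtain ⟨a₁, b₁, ha₁, hb₁, hab₁, e₁⟩ := hs₁
  obtain ⟨a₂, b₂, ha₂, hb₂, hab₂, e₂⟩ := hs₂
  rcases lt_trichotomy a₁ a₂ with h | h | h
  · exact (key x₁ x₂ h₁ h₂ a₁ b₁ a₂ b₂ ha₁ hb₁ ha₂ hb₂ hab₁ hab₂ e₁ e₂ h).elim
  · subst h
    have hbb : b₁ = b₂ := by linarith
    subst hbb
    exact smul_right_injective V2 ha₁.ne' (add_right_cancel (e₁.trans e₂.symm))
  · exact (key x₂ x₁ h₂ h₁ a₂ b₂ a₁ b₁ ha₂ hb₂ ha₁ hb₁ hab₂ hab₁ e₂ e₁ h).elim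

/-- Quantitative interiority of convex combinations. -/
lemma infDist_combo {Ω : Set V2} (hΩo : IsOpen Ω) (hΩb : Bornology.IsBounded Ω)
    (hΩc : Convex ℝ Ω) {m y q : V2} (hm : m ∈ Ω) (hy : y ∈ closure Ω) {a b : ℝ}
    (ha : 0 < a) (hb : 0 ≤ b) (hab : a + b = 1) (hq : a • m + b • y = q) :
    a * infDist m Ωᶜ ≤ infDist q Ωᶜ := by
  have hne := hb_compl_nonempty hΩb
  set ε := infDist m Ωᶜ with hε
  refine le_of_not_gt fun hlt => ?_
  rw [infDist_lt_iff hne] at hlt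
  obtain ⟨w, hw, hdw⟩ := hlt
  set m' := m + a⁻¹ • (w - q) with hm'
  have hdist : dist m' m < ε := by
    rw [hm', dist_eq_norm, add_sub_cancel_left, norm_smul, Real.norm_eq_abs,
      abs_of_pos (by positivity)]
    have : ‖w - q‖ = dist q w := by rw [dist_eq_norm, norm_sub_rev]
    rw [this]
    calc a⁻¹ * dist q w < a⁻¹ * (a * ε) := by
          apply mul_lt_mul_of_pos_left hdw (by positivity)
      _ = ε := by field_simp
  have hm'Ω : m' ∈ Ω := ball_infDist_subset (by rwa [Metric.mem_ball])
  have hweq : a • m' + b • y = w := by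
    rw [hm', smul_add, smul_smul, mul_inv_cancel₀ ha.ne', one_smul, add_right_comm, hq,
      add_sub_cancel]
  have : w ∈ interior Ω := by
    rw [← hweq]
    exact hΩc.combo_interior_closure_mem_interior (by rwa [hΩo.interior_eq]) hy ha hb hab
  rw [hΩo.interior_eq] at this
  exact hw this

/-- The key lower bound: points at Hilbert distance at most `r` from `c` stay at
Euclidean distance at least `infDist c Ωᶜ * exp (-(2*r))` from the complement. -/
lemma hilbert_lower {Ω : Set V2} (hΩo : IsOpen Ω) (hΩb : Bornology.IsBounded Ω)
    (hΩc : Convex ℝ Ω) {c q : V2} (hc : c ∈ Ω) (hq : q ∈ Ω) {r : ℝ} (hr : 0 ≤ r)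
    (hd : hilbertDist Ω c q ≤ r) :
    infDist c Ωᶜ * Real.exp (-(2*r)) ≤ infDist q Ωᶜ := by
  set ε := infDist c Ωᶜ with hε
  have hεpos : 0 < ε := infDist_pos_of_mem hΩo hΩb hc
  have hqpos : 0 < infDist q Ωᶜ := infDist_pos_of_mem hΩo hΩb hq
  by_cases hqc : q = c
  · subst hqc
    calc ε * Real.exp (-(2*r)) ≤ ε * 1 := by
          apply mul_le_mul_of_nonneg_left _ hεpos.le
          rw [← Real.exp_zero]
          exact Real.exp_le_exp.mpr (by linarith)
      _ = ε := mul_one ε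
  · have hex : ∃ x y : V2, x ∈ frontier Ω ∧ y ∈ frontier Ω ∧
        c ∈ openSegment ℝ x q ∧ q ∈ openSegment ℝ c y := by
      obtain ⟨x, hxf, hcx⟩ := exists_frontier_ext hΩo hΩb hΩc hq hc hqc
      obtain ⟨y, hyf, hqy⟩ := exists_frontier_ext hΩo hΩb hΩc hc hq (fun h => hqc h.symm)
      exact ⟨x, y, hxf, hyf, by rwa [openSegment_symm], hqy⟩
    rw [hilbertDist, dif_pos hex] at hd
    set x := hex.choose with hx
    set y := hex.choose_spec.choose with hy
    obtain ⟨hxf, hyf, hcseg, hqseg⟩ := hex.choose_spec.choose_spec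
    have hxq : dist x c + dist c q = dist x q :=
      dist_add_dist_of_mem_segment (openSegment_subset_segment ℝ _ _ hcseg)
    have hxc_pos : 0 < dist x c := dist_pos.mpr (fun h => frontier_not_mem hΩo hxf (show x ∈ Ω from h ▸ hc))
    have hyc_pos : 0 < dist y c := dist_pos.mpr (fun h => frontier_not_mem hΩo hyf (show y ∈ Ω from h ▸ hc))
    have hyq_pos : 0 < dist y q := dist_pos.mpr (fun h => frontier_not_mem hΩo hyf (show y ∈ Ω from h ▸ hq))
    obtain ⟨a, b, hapos, hbpos, hab, hqeq⟩ := hqseg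
    have hb1 : b = 1 - a := by linarith
    subst hb1
    have hqy' : q - y = a • (c - y) := by
      rw [← hqeq]; module
    have hdqy : dist q y = a * dist c y := by
      rw [dist_eq_norm, hqy', norm_smul, Real.norm_eq_abs, abs_of_pos hapos, ← dist_eq_norm]
    have hinf : a * ε ≤ infDist q Ωᶜ :=
      infDist_combo hΩo hΩb hΩc hc (frontier_subset_closure hyf) hapos (by linarith) hab hqeq
    -- the cross ratio is at least ε / infDist q Ωᶜ
    have hratio : ε / infDist q Ωᶜ ≤
        dist x q * dist y c / (dist x c * dist y q) := by
      have h1 : ε / infDist q Ωᶜ ≤ 1 / a := by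
        rw [div_le_div_iff₀ hqpos hapos]
        nlinarith
      have h2 : 1 / a ≤ dist x q * dist y c / (dist x c * dist y q) := by
        rw [div_le_div_iff₀ hapos (by positivity)]
        have hxq_ge : dist x c ≤ dist x q := by
          have := dist_nonneg (x := c) (y := q)
          linarith
        have hyqc : dist y q = a * dist y c := by
          rw [dist_comm y q, hdqy, dist_comm c y]
        rw [hyqc]
        nlinarith [hyc_pos, hxc_pos]
      linarith
    have hpos : (0:ℝ) < ε / infDist q Ωᶜ := by positivity
    have hlog : Real.log (ε / infDist q Ωᶜ) ≤ 2 * r := by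
      calc Real.log (ε / infDist q Ωᶜ) ≤
          Real.log (dist x q * dist y c / (dist x c * dist y q)) :=
            Real.log_le_log hpos hratio
        _ ≤ 2 * r := by linarith
    rw [Real.log_le_iff_le_exp hpos, div_le_iff₀ hqpos] at hlog
    calc ε * Real.exp (-(2*r)) ≤ (Real.exp (2*r) * infDist q Ωᶜ) * Real.exp (-(2*r)) :=
          mul_le_mul_of_nonneg_right hlog (Real.exp_nonneg _)
      _ = infDist q Ωᶜ := by
          rw [mul_comm (Real.exp (2*r)), mul_assoc, ← Real.exp_add, add_neg_cancel,
            Real.exp_zero, mul_one]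

/-- Closed Hilbert balls are compact subsets of `Ω`; the Hilbert metric space is proper. -/
theorem hilbert_closedBall_compact (Ω : Set V2) (hΩo : IsOpen Ω)
    (hΩb : Bornology.IsBounded Ω) (hΩc : Convex ℝ Ω)
    (c : V2) (hc : c ∈ Ω) (r : ℝ) (hr : 0 ≤ r) :
    IsCompact {p ∈ Ω | hilbertDist Ω c p ≤ r} ∧
    {p ∈ Ω | hilbertDist Ω c p ≤ r} ⊆ Ω := by
  have hsub : {p ∈ Ω | hilbertDist Ω c p ≤ r} ⊆ Ω := fun p hp => hp.1
  refine ⟨?_, hsub⟩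
  have hεpos : 0 < infDist c Ωᶜ := infDist_pos_of_mem hΩo hΩb hc
  set δ := infDist c Ωᶜ * Real.exp (-(2*r)) with hδ
  have hδpos : 0 < δ := by positivity
  apply Metric.isCompact_of_isClosed_isBounded _ (hΩb.subset hsub)
  apply IsSeqClosed.isClosed
  intro u p hu hup
  have hlow : ∀ n, δ ≤ infDist (u n) Ωᶜ := fun n =>
    hilbert_lower hΩo hΩb hΩc hc (hu n).1 hr (hu n).2
  have hpΩ : p ∈ Ω := by
    have hcont := ((Metric.continuous_infDist_pt Ωᶜ).tendsto p).comp hup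
    have hd : δ ≤ infDist p Ωᶜ := ge_of_tendsto hcont (Filter.Eventually.of_forall hlow)
    by_contra hp
    rw [infDist_zero_of_mem (show p ∈ Ωᶜ from hp)] at hd
    linarith
  refine ⟨hpΩ, ?_⟩
  by_cases hpc : p = c
  · subst hpc
    rw [hilbertDist, dif_neg]
    · exact hr
    rintro ⟨x, y, hxf, hyf, hcx, -⟩
    obtain ⟨a, b, ha, hb, hab, heq⟩ := hcx
    have hb1 : b = 1 - a := by linarith
    subst hb1
    have hxp : x = p := by
      apply smul_right_injective V2 ha.ne'
      linear_combination (norm := module) heq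
    exact frontier_not_mem hΩo hxf (hxp ▸ hpΩ)
  · have hev : ∀ᶠ n in Filter.atTop, u n ≠ c :=
      hup.eventually ((isOpen_compl_singleton (x := c)).eventually_mem hpc)
    obtain ⟨N, hN⟩ := Filter.eventually_atTop.mp hev
    set v : ℕ → V2 := fun n => u (n + N) with hv
    have hvS : ∀ n, v n ∈ Ω ∧ hilbertDist Ω c (v n) ≤ r := fun n => ⟨(hu _).1, (hu _).2⟩
    have hvne : ∀ n, v n ≠ c := fun n => hN (n + N) (Nat.le_add_left N n)
    have hvt : Filter.Tendsto v Filter.atTop (nhds p) :=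
      hup.comp (Filter.tendsto_add_atTop_nat N)
    have hex : ∀ n, ∃ x y : V2, x ∈ frontier Ω ∧ y ∈ frontier Ω ∧
        c ∈ openSegment ℝ x (v n) ∧ (v n) ∈ openSegment ℝ c y := by
      intro n
      obtain ⟨x, hxf, hcx⟩ := exists_frontier_ext hΩo hΩb hΩc (hvS n).1 hc (hvne n)
      obtain ⟨y, hyf, hqy⟩ := exists_frontier_ext hΩo hΩb hΩc hc (hvS n).1
        (fun h => hvne n h.symm)
      exact ⟨x, y, hxf, hyf, by rwa [openSegment_symm], hqy⟩
    set X : ℕ → V2 := fun n => (hex n).choose with hX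
    set Y : ℕ → V2 := fun n => (hex n).choose_spec.choose with hY
    have hprop : ∀ n, X n ∈ frontier Ω ∧ Y n ∈ frontier Ω ∧
        c ∈ openSegment ℝ (X n) (v n) ∧ (v n) ∈ openSegment ℝ c (Y n) := fun n => by
      simp only [hX, hY]
      exact (hex n).choose_spec.choose_spec
    have hval : ∀ n, hilbertDist Ω c (v n) =
        (1/2) * Real.log ((dist (X n) (v n) * dist (Y n) c) /
          (dist (X n) c * dist (Y n) (v n))) := fun n => by
      simp only [hX, hY]
      rw [hilbertDist, dif_pos (hex n)]
    have hfrc : IsCompact (frontier Ω) :=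
      Metric.isCompact_of_isClosed_isBounded isClosed_frontier
        (hΩb.closure.subset frontier_subset_closure)
    obtain ⟨x, hxf, φ, hφ, hXt⟩ := hfrc.tendsto_subseq (fun n => (hprop n).1)
    obtain ⟨y, hyf, ψ, hψ, hYt⟩ := hfrc.tendsto_subseq (fun n => (hprop (φ n)).2.1)
    set σ : ℕ → ℕ := φ ∘ ψ with hσ
    have hσt : Filter.Tendsto σ Filter.atTop Filter.atTop :=
      (hφ.comp hψ).tendsto_atTop
    have hXσ : Filter.Tendsto (fun n => X (σ n)) Filter.atTop (nhds x) :=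
      hXt.comp hψ.tendsto_atTop
    have hYσ : Filter.Tendsto (fun n => Y (σ n)) Filter.atTop (nhds y) := hYt
    have hvσ : Filter.Tendsto (fun n => v (σ n)) Filter.atTop (nhds p) := hvt.comp hσt
    have hcseg : c ∈ segment ℝ x p := by
      rw [mem_segment_iff_wbtw, ← dist_add_dist_eq_iff]
      have hlim : Filter.Tendsto
          (fun n => dist (X (σ n)) c + dist c (v (σ n)) - dist (X (σ n)) (v (σ n)))
          Filter.atTop (nhds (dist x c + dist c p - dist x p)) :=
        ((hXσ.dist tendsto_const_nhds).add (tendsto_const_nhds.dist hvσ)).sub (hXσ.dist hvσ)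
      have hz : ∀ n, dist (X (σ n)) c + dist c (v (σ n)) - dist (X (σ n)) (v (σ n)) = 0 :=
        fun n => by
          have := dist_add_dist_of_mem_segment
            (openSegment_subset_segment ℝ _ _ (hprop (σ n)).2.2.1)
          linarith
      have h0 : Filter.Tendsto (fun _ : ℕ => (0:ℝ)) Filter.atTop
          (nhds (dist x c + dist c p - dist x p)) := by
        simpa [hz] using hlim
      have := tendsto_nhds_unique h0 tendsto_const_nhds
      linarith
    have hpseg : p ∈ segment ℝ c y := by
      rw [mem_segment_iff_wbtw, ← dist_add_dist_eq_iff]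
      have hlim : Filter.Tendsto
          (fun n => dist c (v (σ n)) + dist (v (σ n)) (Y (σ n)) - dist c (Y (σ n)))
          Filter.atTop (nhds (dist c p + dist p y - dist c y)) :=
        ((tendsto_const_nhds.dist hvσ).add (hvσ.dist hYσ)).sub (tendsto_const_nhds.dist hYσ)
      have hz : ∀ n, dist c (v (σ n)) + dist (v (σ n)) (Y (σ n)) - dist c (Y (σ n)) = 0 :=
        fun n => by
          have := dist_add_dist_of_mem_segment
            (openSegment_subset_segment ℝ _ _ (hprop (σ n)).2.2.2)
          linarith
      have h0 : Filter.Tendsto (fun _ : ℕ => (0:ℝ)) Filter.atTop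
          (nhds (dist c p + dist p y - dist c y)) := by
        simpa [hz] using hlim
      have := tendsto_nhds_unique h0 tendsto_const_nhds
      linarith
    have hxO : x ∉ Ω := frontier_not_mem hΩo hxf
    have hyO : y ∉ Ω := frontier_not_mem hΩo hyf
    have hcop : c ∈ openSegment ℝ x p :=
      mem_openSegment_of_ne_left_right (fun h => hxO (h ▸ hc)) hpc hcseg
    have hpop : p ∈ openSegment ℝ c y :=
      mem_openSegment_of_ne_left_right (fun h => hpc h.symm) (fun h => hyO (h ▸ hpΩ)) hpseg
    have hfin : ∃ x' y' : V2, x' ∈ frontier Ω ∧ y' ∈ frontier Ω ∧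
        c ∈ openSegment ℝ x' p ∧ p ∈ openSegment ℝ c y' := ⟨x, y, hxf, hyf, hcop, hpop⟩
    rw [hilbertDist, dif_pos hfin]
    obtain ⟨hx'f, hy'f, hc'seg, hp'seg⟩ := hfin.choose_spec.choose_spec
    have hxeq : hfin.choose = x :=
      frontier_unique hΩo hΩc hc hx'f hxf hc'seg hcop
    have hyeq : hfin.choose_spec.choose = y :=
      frontier_unique hΩo hΩc hpΩ hy'f hyf
        (by rwa [openSegment_symm] at hp'seg) (by rwa [openSegment_symm] at hpop)
    rw [hyeq, hxeq]
    have d1 : 0 < dist x p := dist_pos.mpr (fun h => hxO (h ▸ hpΩ))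
    have d2 : 0 < dist y c := dist_pos.mpr (fun h => hyO (h ▸ hc))
    have d3 : 0 < dist x c := dist_pos.mpr (fun h => hxO (h ▸ hc))
    have d4 : 0 < dist y p := dist_pos.mpr (fun h => hyO (h ▸ hpΩ))
    have hRt : Filter.Tendsto
        (fun n => (dist (X (σ n)) (v (σ n)) * dist (Y (σ n)) c) /
          (dist (X (σ n)) c * dist (Y (σ n)) (v (σ n)))) Filter.atTop
        (nhds ((dist x p * dist y c) / (dist x c * dist y p))) :=
      Filter.Tendsto.div ((hXσ.dist hvσ).mul (hYσ.dist tendsto_const_nhds))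
        ((hXσ.dist tendsto_const_nhds).mul (hYσ.dist hvσ)) (by positivity)
    have hLt : Filter.Tendsto
        (fun n => (1/2 : ℝ) * Real.log ((dist (X (σ n)) (v (σ n)) * dist (Y (σ n)) c) /
          (dist (X (σ n)) c * dist (Y (σ n)) (v (σ n))))) Filter.atTop
        (nhds ((1/2 : ℝ) * Real.log ((dist x p * dist y c) / (dist x c * dist y p)))) :=
      Filter.Tendsto.const_mul _
        ((Real.continuousAt_log (by positivity)).tendsto.comp hRt)
    exact le_of_tendsto hLt (Filter.Eventually.of_forall fun n => by
      rw [← hval (σ n)]; exact (hvS (σ n)).2)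
end
end

section
/- In the Hilbert metric on an open bounded convex set Ω, every first-order Voronoi cell is star-shaped with respect to its site: for every point p in the cell of site s, the entire Euclidean segment from s to p lies in the cell. -/
noncomputable section
open Classical

namespace HVAux

variable {Ω : Set V2}

lemma frontier_not_mem (hΩo : IsOpen Ω) {z : V2} (hz : z ∈ frontier Ω) : z ∉ Ω := by
  rw [hΩo.frontier_eq] at hz; exact hz.2

lemma ray_unique_aux (hΩo : IsOpen Ω) (hΩc : Convex ℝ Ω) {c v : V2} (hc : c ∈ Ω)
    {t t' : ℝ} (ht : 0 < t) (htt' : t < t') (hf : c + t • v ∈ frontier Ω)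
    (hf' : c + t' • v ∈ frontier Ω) : False := by
  have ht'0 : 0 < t' := ht.trans htt'
  have hmem : c + t • v ∈ openSegment ℝ c (c + t' • v) := by
    have hlt1 : t / t' < 1 := (div_lt_one ht'0).2 htt'
    have hpos : 0 < t / t' := by positivity
    refine ⟨1 - t / t', t / t', by linarith, hpos, by ring, ?_⟩
    match_scalars <;> field_simp <;> ring
  have : c + t • v ∈ interior Ω :=
    hΩc.openSegment_interior_closure_subset_interior
      (by rwa [hΩo.interior_eq]) (frontier_subset_closure hf') hmem
  rw [hΩo.interior_eq] at this
  exact frontier_not_mem hΩo hf this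

lemma ray_unique (hΩo : IsOpen Ω) (hΩc : Convex ℝ Ω) {c v : V2} (hc : c ∈ Ω)
    {t t' : ℝ} (ht : 0 < t) (ht' : 0 < t') (hf : c + t • v ∈ frontier Ω)
    (hf' : c + t' • v ∈ frontier Ω) : t = t' := by
  rcases lt_trichotomy t t' with h | h | h
  · exact absurd (ray_unique_aux hΩo hΩc hc ht h hf hf') (by simp)
  · exact h
  · exact absurd (ray_unique_aux hΩo hΩc hc ht' h hf' hf) (by simp)

lemma ray_exists (hΩo : IsOpen Ω) (hΩb : Bornology.IsBounded Ω) (hΩc : Convex ℝ Ω)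
    {a v : V2} (ha : a ∈ Ω) (hav : a + v ∈ Ω) (hv : v ≠ 0) :
    ∃ β : ℝ, 1 < β ∧ a + β • v ∈ frontier Ω := by
  set K : Set ℝ := {t : ℝ | a + t • v ∈ Ω} with hK
  have hKopen : IsOpen K := by
    have hcont : Continuous fun t : ℝ => a + t • v :=
      continuous_const.add (continuous_id.smul continuous_const)
    exact hΩo.preimage hcont
  have h1K : (1 : ℝ) ∈ K := by simpa [hK] using hav
  obtain ⟨C, hC⟩ := isBounded_iff_forall_norm_le.1 hΩb
  have hvpos : 0 < ‖v‖ := norm_pos_iff.2 hv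
  have hbdd : BddAbove K := by
    refine ⟨(C + ‖a‖) / ‖v‖, fun t htK => ?_⟩
    have h1 : ‖a + t • v‖ ≤ C := hC _ htK
    have h2 : ‖t • v‖ ≤ ‖a + t • v‖ + ‖a‖ := by
      have := norm_sub_le (a + t • v) a
      simpa using this
    rw [le_div_iff₀ hvpos]
    calc t * ‖v‖ ≤ |t| * ‖v‖ := by
          have : t ≤ |t| := le_abs_self t
          nlinarith
      _ ≤ C + ‖a‖ := by rw [norm_smul, Real.norm_eq_abs] at h2; linarith
  set T := sSup K with hT
  have hball : ∃ ε > 0, Metric.ball (1 : ℝ) ε ⊆ K := Metric.isOpen_iff.1 hKopen 1 h1K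
  obtain ⟨ε, hε, hεsub⟩ := hball
  have hT1 : 1 + ε / 2 ≤ T := by
    apply le_csSup hbdd
    apply hεsub
    simp [Real.ball_eq_Ioo]
    constructor <;> linarith
  have hTgt1 : 1 < T := by linarith
  have hTcl : T ∈ closure K := csSup_mem_closure ⟨1, h1K⟩ hbdd
  have hfT_cl : a + T • v ∈ closure Ω := by
    have hmaps : Set.MapsTo (fun t : ℝ => a + t • v) K Ω := fun t ht => ht
    have hcont : Continuous fun t : ℝ => a + t • v :=
      continuous_const.add (continuous_id.smul continuous_const)
    exact hmaps.closure hcont hTcl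
  have hfT_not : a + T • v ∉ Ω := by
    intro hmem
    have hTK : T ∈ K := hmem
    obtain ⟨δ, hδ, hδsub⟩ := Metric.isOpen_iff.1 hKopen T hTK
    have : T + δ / 2 ∈ K := by
      apply hδsub
      simp [Real.ball_eq_Ioo]
      constructor <;> linarith
    have := le_csSup hbdd this
    linarith
  exact ⟨T, hTgt1, by rw [hΩo.frontier_eq]; exact ⟨hfT_cl, hfT_not⟩⟩



lemma openSegment_char {x p q : V2} (hpq : p ≠ q) :
    p ∈ openSegment ℝ x q ↔ ∃ α : ℝ, 1 < α ∧ x = q + α • (p - q) := by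
  constructor
  · rintro ⟨u, w, hu, hw, huw, heq⟩
    refine ⟨1 / u, ?_, ?_⟩
    · rw [lt_div_iff₀ hu]
      linarith
    · have hu' : u ≠ 0 := ne_of_gt hu
      have hw' : w = 1 - u := by linarith
      rw [hw'] at heq
      rw [← heq]
      match_scalars <;> (field_simp; try ring)
  · rintro ⟨α, hα, rfl⟩
    have hα0 : 0 < α := by linarith
    refine ⟨1 / α, 1 - 1 / α, by positivity, ?_, by ring, ?_⟩
    · have : 1 / α < 1 := by rw [div_lt_one hα0]; exact hα
      linarith
    · match_scalars <;> (field_simp; try ring)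

lemma openSegment_char' {y p q : V2} (hpq : p ≠ q) :
    q ∈ openSegment ℝ p y ↔ ∃ β : ℝ, 1 < β ∧ y = p + β • (q - p) := by
  rw [openSegment_symm]
  exact openSegment_char hpq.symm

/-- The key computation: `hilbertDist` in terms of chord parameters. -/
lemma hilbertDist_formula (hΩo : IsOpen Ω) (hΩc : Convex ℝ Ω) {p q : V2}
    (hp : p ∈ Ω) (hq : q ∈ Ω) (hpq : p ≠ q) {α β : ℝ} (hα : 1 < α) (hβ : 1 < β)
    (hxf : q + α • (p - q) ∈ frontier Ω) (hyf : p + β • (q - p) ∈ frontier Ω) :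
    hilbertDist Ω p q =
      (1/2) * (Real.log (α / (α - 1)) + Real.log (β / (β - 1))) := by
  have hqp : q ≠ p := hpq.symm
  have hex : ∃ x y : V2, x ∈ frontier Ω ∧ y ∈ frontier Ω ∧
      p ∈ openSegment ℝ x q ∧ q ∈ openSegment ℝ p y := by
    refine ⟨q + α • (p - q), p + β • (q - p), hxf, hyf, ?_, ?_⟩
    · exact (openSegment_char hpq).2 ⟨α, hα, rfl⟩
    · exact (openSegment_char' hpq).2 ⟨β, hβ, rfl⟩
  rw [hilbertDist, dif_pos hex]
  obtain ⟨hx0f, hy0f, hx0seg, hy0seg⟩ := hex.choose_spec.choose_spec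
  obtain ⟨α₀, hα₀, hx0⟩ := (openSegment_char hpq).1 hx0seg
  obtain ⟨β₀, hβ₀, hy0⟩ := (openSegment_char' hpq).1 hy0seg
  have hαα : α₀ = α := by
    refine ray_unique hΩo hΩc hq (by linarith) (by linarith) ?_ hxf
    rw [← hx0]; exact hx0f
  have hββ : β₀ = β := by
    refine ray_unique hΩo hΩc hp (by linarith) (by linarith) ?_ hyf
    rw [← hy0]; exact hy0f
  rw [hαα] at hx0; rw [hββ] at hy0
  have main : ∀ x0 y0 : V2, x0 = q + α • (p - q) → y0 = p + β • (q - p) →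
      (1/2 : ℝ) * Real.log ((dist x0 q * dist y0 p) / (dist x0 p * dist y0 q)) =
      (1/2) * (Real.log (α / (α - 1)) + Real.log (β / (β - 1))) := by
    rintro x0 y0 rfl rfl
    have hn : (0:ℝ) < ‖p - q‖ := by
      rw [norm_pos_iff]; exact sub_ne_zero.2 hpq
    have hn' : ‖q - p‖ = ‖p - q‖ := norm_sub_rev q p
    have d1 : dist (q + α • (p - q)) q = α * ‖p - q‖ := by
      rw [dist_eq_norm]
      have : q + α • (p - q) - q = α • (p - q) := by abel
      rw [this, norm_smul, Real.norm_eq_abs, abs_of_pos (by linarith)]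
    have d2 : dist (q + α • (p - q)) p = (α - 1) * ‖p - q‖ := by
      rw [dist_eq_norm]
      have : q + α • (p - q) - p = (α - 1) • (p - q) := by module
      rw [this, norm_smul, Real.norm_eq_abs, abs_of_pos (by linarith)]
    have d3 : dist (p + β • (q - p)) p = β * ‖p - q‖ := by
      rw [dist_eq_norm]
      have : p + β • (q - p) - p = β • (q - p) := by abel
      rw [this, norm_smul, Real.norm_eq_abs, abs_of_pos (by linarith), hn']
    have d4 : dist (p + β • (q - p)) q = (β - 1) * ‖p - q‖ := by
      rw [dist_eq_norm]
      have : p + β • (q - p) - q = (β - 1) • (q - p) := by module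
      rw [this, norm_smul, Real.norm_eq_abs, abs_of_pos (by linarith), hn']
    rw [d1, d2, d3, d4]
    have e1 : α - 1 ≠ 0 := by linarith
    have e2 : β - 1 ≠ 0 := by linarith
    have e3 : ‖p - q‖ ≠ 0 := ne_of_gt hn
    have hratio : α * ‖p - q‖ * (β * ‖p - q‖) / ((α - 1) * ‖p - q‖ * ((β - 1) * ‖p - q‖))
        = (α / (α - 1)) * (β / (β - 1)) := by
      field_simp
    rw [hratio, Real.log_mul (ne_of_gt (div_pos (by linarith) (by linarith)))
      (ne_of_gt (div_pos (by linarith) (by linarith)))]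
  exact main _ _ hx0 hy0

lemma hilbertDist_self (hΩo : IsOpen Ω) {p : V2} (hp : p ∈ Ω) :
    hilbertDist Ω p p = 0 := by
  rw [hilbertDist, dif_neg]
  rintro ⟨x, y, hxf, hyf, hxseg, hyseg⟩
  rw [right_mem_openSegment_iff] at hxseg
  rw [← hxseg] at hp
  exact frontier_not_mem hΩo hxf hp

lemma hilbertDist_exists_params (hΩo : IsOpen Ω) (hΩb : Bornology.IsBounded Ω)
    (hΩc : Convex ℝ Ω) {p q : V2} (hp : p ∈ Ω) (hq : q ∈ Ω) (hpq : p ≠ q) :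
    ∃ α β : ℝ, 1 < α ∧ 1 < β ∧ q + α • (p - q) ∈ frontier Ω ∧
      p + β • (q - p) ∈ frontier Ω := by
  obtain ⟨α, hα, hαf⟩ := ray_exists hΩo hΩb hΩc hq (by simpa using hp)
    (sub_ne_zero.2 hpq)
  obtain ⟨β, hβ, hβf⟩ := ray_exists hΩo hΩb hΩc hp (by simpa using hq)
    (sub_ne_zero.2 hpq.symm)
  exact ⟨α, β, hα, hβ, hαf, hβf⟩

lemma log_ratio_pos {α : ℝ} (hα : 1 < α) : 0 < Real.log (α / (α - 1)) := by
  apply Real.log_pos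
  rw [lt_div_iff₀ (by linarith)]
  linarith

lemma hilbertDist_pos (hΩo : IsOpen Ω) (hΩb : Bornology.IsBounded Ω)
    (hΩc : Convex ℝ Ω) {p q : V2} (hp : p ∈ Ω) (hq : q ∈ Ω) (hpq : p ≠ q) :
    0 < hilbertDist Ω p q := by
  obtain ⟨α, β, hα, hβ, hαf, hβf⟩ := hilbertDist_exists_params hΩo hΩb hΩc hp hq hpq
  rw [hilbertDist_formula hΩo hΩc hp hq hpq hα hβ hαf hβf]
  have := log_ratio_pos hα
  have := log_ratio_pos hβ
  linarith

lemma hilbertDist_symm (hΩo : IsOpen Ω) (hΩb : Bornology.IsBounded Ω)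
    (hΩc : Convex ℝ Ω) {p q : V2} (hp : p ∈ Ω) (hq : q ∈ Ω) :
    hilbertDist Ω p q = hilbertDist Ω q p := by
  by_cases hpq : p = q
  · rw [hpq]
  obtain ⟨α, β, hα, hβ, hαf, hβf⟩ := hilbertDist_exists_params hΩo hΩb hΩc hp hq hpq
  rw [hilbertDist_formula hΩo hΩc hp hq hpq hα hβ hαf hβf,
    hilbertDist_formula hΩo hΩc hq hp (Ne.symm hpq) hβ hα hβf hαf]
  ring

/-- Additivity of the Hilbert distance along a segment. -/
lemma hilbertDist_add (hΩo : IsOpen Ω) (hΩb : Bornology.IsBounded Ω)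
    (hΩc : Convex ℝ Ω) {s p : V2} (hsΩ : s ∈ Ω) (hpΩ : p ∈ Ω) (hsp : s ≠ p)
    {t : ℝ} (ht0 : 0 < t) (ht1 : t < 1) :
    hilbertDist Ω s (s + t • (p - s)) + hilbertDist Ω (s + t • (p - s)) p
      = hilbertDist Ω s p := by
  set z : V2 := s + t • (p - s) with hz
  have hps : p ≠ s := hsp.symm
  have hzΩ : z ∈ Ω := by
    have : z = (1 - t) • s + t • p := by rw [hz]; module
    rw [this]
    exact hΩc hsΩ hpΩ (by linarith) (by linarith) (by ring)
  have hvs : p - s ≠ 0 := sub_ne_zero.2 hps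
  have hzs : z ≠ s := by
    rw [hz]
    intro h
    have : t • (p - s) = 0 := by
      have := congrArg (fun w => w - s) h
      simpa using this
    rcases smul_eq_zero.1 this with h' | h'
    · exact (ne_of_gt ht0) h'
    · exact hvs h'
  have hzp : z ≠ p := by
    rw [hz]
    intro h
    have h3 : p - (s + t • (p - s)) = (1 - t) • (p - s) := by module
    rw [h, sub_self] at h3
    rcases smul_eq_zero.1 h3.symm with h' | h'
    · have : (1:ℝ) = t := sub_eq_zero.1 h'
      linarith
    · exact hvs h'
  -- chord endpoints for the line through s and p
  obtain ⟨A, hA, hAf⟩ := ray_exists (v := s - p) hΩo hΩb hΩc hpΩ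
    (by simpa using hsΩ) (sub_ne_zero.2 hsp)
  obtain ⟨B, hB, hBf⟩ := ray_exists (v := p - s) hΩo hΩb hΩc hsΩ
    (by simpa using hpΩ) hvs
  -- hAf : p + A • (s - p) ∈ frontier Ω,  hBf : s + B • (p - s) ∈ frontier Ω
  have htne : t ≠ 0 := ne_of_gt ht0
  have ht1ne : (1:ℝ) - t ≠ 0 := ne_of_gt (by linarith : (0:ℝ) < 1 - t)
  -- d(s,p)
  have dsp : hilbertDist Ω s p = (1/2) * (Real.log (A / (A - 1)) + Real.log (B / (B - 1))) :=
    hilbertDist_formula hΩo hΩc hsΩ hpΩ hsp hA hB hAf hBf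
  -- d(s,z) : α₁ = (t + A - 1)/t, β₁ = B / t
  have hα₁ : 1 < (t + A - 1) / t := by
    rw [lt_div_iff₀ ht0]; linarith
  have hβ₁ : 1 < B / t := by
    rw [lt_div_iff₀ ht0]; nlinarith
  have hx₁ : z + ((t + A - 1) / t) • (s - z) = p + A • (s - p) := by
    rw [hz]; match_scalars <;> (field_simp; try ring)
  have hy₁ : s + (B / t) • (z - s) = s + B • (p - s) := by
    rw [hz]; match_scalars <;> (field_simp; try ring)
  have dsz : hilbertDist Ω s z = (1/2) * (Real.log (((t + A - 1) / t) / ((t + A - 1) / t - 1))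
      + Real.log ((B / t) / (B / t - 1))) := by
    refine hilbertDist_formula hΩo hΩc hsΩ hzΩ hzs.symm hα₁ hβ₁ ?_ ?_
    · rw [hx₁]; exact hAf
    · rw [hy₁]; exact hBf
  -- d(z,p) : α₂ = A / (1 - t), β₂ = (B - t)/(1 - t)
  have h1t : (0:ℝ) < 1 - t := by linarith
  have hα₂ : 1 < A / (1 - t) := by rw [lt_div_iff₀ h1t]; linarith
  have hβ₂ : 1 < (B - t) / (1 - t) := by rw [lt_div_iff₀ h1t]; linarith
  have hx₂ : p + (A / (1 - t)) • (z - p) = p + A • (s - p) := by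
    rw [hz]; match_scalars <;> (field_simp; try ring) <;> try tauto
  have hy₂ : z + ((B - t) / (1 - t)) • (p - z) = s + B • (p - s) := by
    rw [hz]; match_scalars <;> (field_simp; try ring)
  have dzp : hilbertDist Ω z p = (1/2) * (Real.log ((A / (1 - t)) / (A / (1 - t) - 1))
      + Real.log (((B - t) / (1 - t)) / ((B - t) / (1 - t) - 1))) := by
    refine hilbertDist_formula hΩo hΩc hzΩ hpΩ hzp hα₂ hβ₂ ?_ ?_
    · rw [hx₂]; exact hAf
    · rw [hy₂]; exact hBf
  -- now pure log arithmetic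
  have pA : (0:ℝ) < A - 1 := by linarith
  have pB : (0:ℝ) < B - 1 := by linarith
  have pBt : (0:ℝ) < B - t := by linarith
  have pAt : (0:ℝ) < t + A - 1 := by linarith
  have pA' : A - 1 ≠ 0 := ne_of_gt pA
  have pB' : B - 1 ≠ 0 := ne_of_gt pB
  have pBt' : B - t ≠ 0 := ne_of_gt pBt
  have pAt' : t + A - 1 ≠ 0 := ne_of_gt pAt
  have pAt2' : A - 1 + t ≠ 0 := by intro h; apply pAt'; linarith
  have l1 : ((t + A - 1) / t) / ((t + A - 1) / t - 1) = (t + A - 1) / (A - 1) := by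
    have h : (t + A - 1) / t - 1 = (A - 1) / t := by field_simp; try ring
    rw [h, div_div_div_cancel_right₀ htne]
  have l2 : (B / t) / (B / t - 1) = B / (B - t) := by
    have h : B / t - 1 = (B - t) / t := by field_simp; try ring
    rw [h, div_div_div_cancel_right₀ htne]
  have l3 : (A / (1 - t)) / (A / (1 - t) - 1) = A / (A - 1 + t) := by
    have h : A / (1 - t) - 1 = (A - 1 + t) / (1 - t) := by field_simp; try ring
    rw [h, div_div_div_cancel_right₀ ht1ne]
  have l4 : ((B - t) / (1 - t)) / ((B - t) / (1 - t) - 1) = (B - t) / (B - 1) := by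
    have h : (B - t) / (1 - t) - 1 = (B - 1) / (1 - t) := by field_simp; try ring
    rw [h, div_div_div_cancel_right₀ ht1ne]
  rw [dsz, dzp, dsp, l1, l2, l3, l4]
  rw [Real.log_div pAt' pA', Real.log_div (by linarith) pBt',
    Real.log_div (by linarith) pAt2', Real.log_div pBt' pB',
    Real.log_div (by linarith) pA', Real.log_div (by linarith) pB']
  have hAe : A - 1 + t = t + A - 1 := by ring
  rw [hAe]
  ring

/-- Core of the Funk-metric triangle inequality, via Menelaus-type computation. -/
lemma funk_core (hΩo : IsOpen Ω) (hΩc : Convex ℝ Ω) {a b c : V2}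
    (ha : a ∈ Ω) {α β γ₀ : ℝ} (hα : 1 < α) (hβ : 1 < β) (hγ₀ : 1 < γ₀)
    (hx : a + α • (b - a) ∈ frontier Ω) (hy : b + β • (c - b) ∈ frontier Ω)
    (hz : a + γ₀ • (c - a) ∈ frontier Ω) :
    Real.log (γ₀ / (γ₀ - 1)) ≤ Real.log (α / (α - 1)) + Real.log (β / (β - 1)) := by
  have hd : (0:ℝ) < α + β - 1 := by linarith
  set γ : ℝ := α * β / (α + β - 1) with hγ
  have hγ1 : 1 < γ := by
    rw [hγ, lt_div_iff₀ hd]; nlinarith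
  have ht0 : (0:ℝ) ≤ α / (α + β - 1) := by positivity
  have ht1 : α / (α + β - 1) ≤ 1 := by
    rw [div_le_one hd]; linarith
  have hid : (1 - α / (α + β - 1)) • (a + α • (b - a)) + (α / (α + β - 1)) • (b + β • (c - b))
      = a + γ • (c - a) := by
    rw [hγ]; match_scalars <;> (field_simp; try ring)
  have hz' : a + γ • (c - a) ∈ closure Ω := by
    rw [← hid]
    exact hΩc.closure.segment_subset (frontier_subset_closure hx) (frontier_subset_closure hy)
      ⟨1 - α / (α + β - 1), α / (α + β - 1), by linarith, ht0, by ring, rfl⟩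
  have hγγ₀ : γ ≤ γ₀ := by
    by_contra hlt
    push_neg at hlt
    have hu0 : 0 < γ₀ / γ := by positivity
    have hu1 : γ₀ / γ < 1 := by rw [div_lt_one (by linarith)]; exact hlt
    have hmem : a + γ₀ • (c - a) ∈ openSegment ℝ a (a + γ • (c - a)) := by
      refine ⟨1 - γ₀ / γ, γ₀ / γ, by linarith, hu0, by ring, ?_⟩
      match_scalars <;> (field_simp; try ring)
    have : a + γ₀ • (c - a) ∈ interior Ω :=
      hΩc.openSegment_interior_closure_subset_interior (by rwa [hΩo.interior_eq]) hz' hmem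
    rw [hΩo.interior_eq] at this
    exact frontier_not_mem hΩo hz this
  have hmono : γ₀ / (γ₀ - 1) ≤ γ / (γ - 1) := by
    rw [div_le_div_iff₀ (by linarith) (by linarith)]
    nlinarith
  have hsplit : γ / (γ - 1) = (α / (α - 1)) * (β / (β - 1)) := by
    rw [hγ]
    have h1 : α - 1 ≠ 0 := by linarith
    have h2 : β - 1 ≠ 0 := by linarith
    have h3 : α * β / (α + β - 1) - 1 = (α - 1) * (β - 1) / (α + β - 1) := by
      field_simp; try ring
    rw [h3, div_div_div_cancel_right₀ (ne_of_gt hd), div_mul_div_comm]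
  calc Real.log (γ₀ / (γ₀ - 1)) ≤ Real.log (γ / (γ - 1)) :=
        Real.log_le_log (div_pos (by linarith) (by linarith)) hmono
    _ = Real.log (α / (α - 1)) + Real.log (β / (β - 1))  := by
        rw [hsplit, Real.log_mul (ne_of_gt (div_pos (by linarith) (by linarith)))
          (ne_of_gt (div_pos (by linarith) (by linarith)))]

/-- Triangle inequality for the Hilbert distance (pairwise distinct points). -/
lemma hilbertDist_triangle (hΩo : IsOpen Ω) (hΩb : Bornology.IsBounded Ω)
    (hΩc : Convex ℝ Ω) {a b c : V2} (ha : a ∈ Ω) (hb : b ∈ Ω) (hc : c ∈ Ω)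
    (hab : a ≠ b) (hbc : b ≠ c) (hac : a ≠ c) :
    hilbertDist Ω a c ≤ hilbertDist Ω a b + hilbertDist Ω b c := by
  obtain ⟨α₁, β₁, hα₁, hβ₁, hf₁, hg₁⟩ := hilbertDist_exists_params hΩo hΩb hΩc ha hb hab
  obtain ⟨α₂, β₂, hα₂, hβ₂, hf₂, hg₂⟩ := hilbertDist_exists_params hΩo hΩb hΩc hb hc hbc
  obtain ⟨α₃, β₃, hα₃, hβ₃, hf₃, hg₃⟩ := hilbertDist_exists_params hΩo hΩb hΩc ha hc hac
  -- hf₁ : b + α₁ • (a - b) ∈ frontier Ω, hg₁ : a + β₁ • (b - a) ∈ frontier Ω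
  -- hf₂ : c + α₂ • (b - c) ∈ frontier Ω, hg₂ : b + β₂ • (c - b) ∈ frontier Ω
  -- hf₃ : c + α₃ • (a - c) ∈ frontier Ω, hg₃ : a + β₃ • (c - a) ∈ frontier Ω
  rw [hilbertDist_formula hΩo hΩc ha hb hab hα₁ hβ₁ hf₁ hg₁,
    hilbertDist_formula hΩo hΩc hb hc hbc hα₂ hβ₂ hf₂ hg₂,
    hilbertDist_formula hΩo hΩc ha hc hac hα₃ hβ₃ hf₃ hg₃]
  have t1 : Real.log (β₃ / (β₃ - 1)) ≤ Real.log (β₁ / (β₁ - 1)) + Real.log (β₂ / (β₂ - 1)) :=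
    funk_core hΩo hΩc ha hβ₁ hβ₂ hβ₃ hg₁ hg₂ hg₃
  have t2 : Real.log (α₃ / (α₃ - 1)) ≤ Real.log (α₂ / (α₂ - 1)) + Real.log (α₁ / (α₁ - 1)) :=
    funk_core hΩo hΩc hc hα₂ hα₁ hα₃ hf₂ hf₁ hf₃
  linarith

end HVAux

open HVAux in
/-- First-order Hilbert Voronoi cells are star-shaped with respect to their site. -/
theorem hilbert_voronoi_cell_starShaped (Ω : Set V2) (hΩo : IsOpen Ω)
    (hΩb : Bornology.IsBounded Ω) (hΩc : Convex ℝ Ω)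
    (S : Finset V2) (hS : ↑S ⊆ Ω) (s : V2) (hs : s ∈ S)
    (p : V2)
    (hp : p ∈ {x ∈ Ω | ∀ s' ∈ S, s' ≠ s → hilbertDist Ω x s < hilbertDist Ω x s'}) :
    segment ℝ s p ⊆ {x ∈ Ω | ∀ s' ∈ S, s' ≠ s → hilbertDist Ω x s < hilbertDist Ω x s'} := by
  have hsΩ : s ∈ Ω := hS hs
  obtain ⟨hpΩ, hp2⟩ := hp
  intro z hzseg
  rw [segment_eq_image'] at hzseg
  obtain ⟨t, ⟨ht0, ht1⟩, rfl⟩ := hzseg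
  show s + t • (p - s) ∈ {x ∈ Ω | ∀ s' ∈ S, s' ≠ s → hilbertDist Ω x s < hilbertDist Ω x s'}
  by_cases hsp : s = p
  · subst hsp
    have hzs : s + t • (s - s) = s := by simp
    rw [hzs]
    refine ⟨hsΩ, fun s' hs' hne => ?_⟩
    rw [hilbertDist_self hΩo hsΩ]
    exact hilbertDist_pos hΩo hΩb hΩc hsΩ (hS hs') (Ne.symm hne)
  have hzΩ : s + t • (p - s) ∈ Ω := by
    have : s + t • (p - s) = (1 - t) • s + t • p := by module
    rw [this]
    exact hΩc hsΩ hpΩ (by linarith) ht0 (by ring)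
  refine ⟨hzΩ, fun s' hs' hne => ?_⟩
  have hs'Ω : s' ∈ Ω := hS hs'
  by_cases ht0' : t = 0
  · subst ht0'
    have hzs : s + (0:ℝ) • (p - s) = s := by simp
    rw [hzs, hilbertDist_self hΩo hsΩ]
    exact hilbertDist_pos hΩo hΩb hΩc hsΩ hs'Ω (Ne.symm hne)
  by_cases ht1' : t = 1
  · subst ht1'
    have hzp : s + (1:ℝ) • (p - s) = p := by module
    rw [hzp]
    exact hp2 s' hs' hne
  have ht0'' : 0 < t := lt_of_le_of_ne ht0 (Ne.symm ht0')
  have ht1'' : t < 1 := lt_of_le_of_ne ht1 ht1'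
  set z : V2 := s + t • (p - s) with hz
  have hvs : p - s ≠ 0 := sub_ne_zero.2 (Ne.symm hsp)
  have hzs : z ≠ s := by
    rw [hz]
    intro h
    have h3 : (s + t • (p - s)) - s = t • (p - s) := by module
    rw [h, sub_self] at h3
    rcases smul_eq_zero.1 h3.symm with h' | h'
    · exact ht0' h'
    · exact hvs h'
  have hzp : z ≠ p := by
    rw [hz]
    intro h
    have h3 : p - (s + t • (p - s)) = (1 - t) • (p - s) := by module
    rw [h, sub_self] at h3
    rcases smul_eq_zero.1 h3.symm with h' | h'
    · have : (1:ℝ) = t := sub_eq_zero.1 h'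
      linarith
    · exact hvs h'
  have key : hilbertDist Ω p s < hilbertDist Ω p s' := hp2 s' hs' hne
  have hps' : p ≠ s' := by
    intro h
    rw [← h, hilbertDist_self hΩo hpΩ] at key
    have := hilbertDist_pos hΩo hΩb hΩc hpΩ hsΩ (fun he => hsp he.symm)
    linarith
  have hadd : hilbertDist Ω s z + hilbertDist Ω z p = hilbertDist Ω s p :=
    hilbertDist_add hΩo hΩb hΩc hsΩ hpΩ hsp ht0'' ht1''
  have hsym1 : hilbertDist Ω z s = hilbertDist Ω s z := hilbertDist_symm hΩo hΩb hΩc hzΩ hsΩ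
  have hsym2 : hilbertDist Ω z p = hilbertDist Ω p z := hilbertDist_symm hΩo hΩb hΩc hzΩ hpΩ
  have hsym3 : hilbertDist Ω s p = hilbertDist Ω p s := hilbertDist_symm hΩo hΩb hΩc hsΩ hpΩ
  have hzs' : z ≠ s' := by
    intro h
    have h1 : hilbertDist Ω p s' = hilbertDist Ω p z := by rw [h]
    have h2 : 0 < hilbertDist Ω s z := hilbertDist_pos hΩo hΩb hΩc hsΩ hzΩ (Ne.symm hzs)
    linarith
  have htri : hilbertDist Ω p s' ≤ hilbertDist Ω p z + hilbertDist Ω z s' :=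
    hilbertDist_triangle hΩo hΩb hΩc hpΩ hzΩ hs'Ω hzp.symm hzs' hps'
  linarith
end
end

section
/- For two distinct sites p, q in an open bounded convex Ω with Hilbert metric, the bisector {x ∈ Ω : d_Ω(x,p) = d_Ω(x,q)} is a closed subset of Ω that separates p from q: p and q lie in different connected components of its complement in Ω. -/
noncomputable section
open Classical

namespace HB
open Set Metric Pointwise

def tr (Ω : Set V2) (a : V2) : Set V2 := (a + ·) ⁻¹' Ω
def G (Ω : Set V2) (a v : V2) : ℝ := gauge (tr Ω a) v
def F (Ω : Set V2) (a b : V2) : ℝ :=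
  (1/2) * Real.log ((1 + G Ω a (a - b)) / (1 - G Ω a (b - a)))

variable {Ω : Set V2} {a a' a₀ b v v' v₀ p q x y : V2} {ε : ℝ}

lemma mem_tr : v ∈ tr Ω a ↔ a + v ∈ Ω := Iff.rfl

lemma tr_convex (hΩc : Convex ℝ Ω) (a : V2) : Convex ℝ (tr Ω a) :=
  hΩc.translate_preimage_right a

lemma tr_open (hΩo : IsOpen Ω) (a : V2) : IsOpen (tr Ω a) :=
  hΩo.preimage (continuous_add_left a)

lemma tr_zero_mem (ha : a ∈ Ω) : (0 : V2) ∈ tr Ω a := by simp [mem_tr, ha]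

lemma tr_nhds (hΩo : IsOpen Ω) (ha : a ∈ Ω) : tr Ω a ∈ nhds 0 :=
  (tr_open hΩo a).mem_nhds (tr_zero_mem ha)

lemma tr_absorbent (hΩo : IsOpen Ω) (ha : a ∈ Ω) : Absorbent ℝ (tr Ω a) :=
  absorbent_nhds_zero (tr_nhds hΩo ha)

lemma tr_bounded (hΩb : Bornology.IsBounded Ω) (a : V2) :
    Bornology.IsVonNBounded ℝ (tr Ω a) := by
  refine NormedSpace.isVonNBounded_of_isBounded _ ?_
  obtain ⟨R, hR⟩ := hΩb.subset_closedBall 0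
  refine (Metric.isBounded_closedBall (x := (0:V2)) (r := R + ‖a‖)).subset ?_
  intro y hy
  rw [mem_closedBall, dist_zero_right]
  calc ‖y‖ = ‖a + y - a‖ := by rw [add_sub_cancel_left]
    _ ≤ ‖a + y‖ + ‖a‖ := norm_sub_le _ _
    _ ≤ R + ‖a‖ := by have := mem_closedBall_zero_iff.1 (hR hy); linarith

lemma mem_frontier_tr : v ∈ frontier (tr Ω a) ↔ a + v ∈ frontier Ω := by
  have h := (Homeomorph.addLeft a).preimage_frontier Ω
  have : tr Ω a = (Homeomorph.addLeft a) ⁻¹' Ω := rfl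
  rw [this, ← h]; rfl

lemma ray_frontier (hΩo : IsOpen Ω) (hΩc : Convex ℝ Ω) (ha : a ∈ Ω) {r : ℝ} (hr : 0 < r) :
    a + r • v ∈ frontier Ω ↔ r * G Ω a v = 1 := by
  rw [← mem_frontier_tr, ← gauge_eq_one_iff_mem_frontier (tr_convex hΩc a) (tr_nhds hΩo ha),
    gauge_smul_of_nonneg hr.le, smul_eq_mul]
  rfl

lemma G_nonneg : 0 ≤ G Ω a v := gauge_nonneg _

lemma G_pos (hΩo : IsOpen Ω) (hΩb : Bornology.IsBounded Ω) (ha : a ∈ Ω) (hv : v ≠ 0) :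
    0 < G Ω a v :=
  (gauge_pos (tr_absorbent hΩo ha) (tr_bounded hΩb a)).2 hv

lemma G_lt_one (hΩo : IsOpen Ω) (hb : a + v ∈ Ω) : G Ω a v < 1 :=
  gauge_lt_one_of_mem_of_isOpen (tr_open hΩo a) hb

lemma G_zero : G Ω a 0 = 0 := gauge_zero





lemma ball_subset_tr (h2ε : closedBall a₀ (2*ε) ⊆ Ω) (ha : a ∈ ball a₀ ε) :
    ball 0 ε ⊆ tr Ω a := by
  intro y hy
  refine h2ε ?_
  rw [mem_closedBall]
  calc dist (a + y) a₀ ≤ dist (a + y) a + dist a a₀ := dist_triangle _ _ _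
    _ ≤ ε + ε := by
        refine add_le_add ?_ (le_of_lt (mem_ball.1 ha))
        rw [dist_eq_norm, add_sub_cancel_left]
        exact (mem_ball_zero_iff.1 hy).le
    _ = 2*ε := by ring

lemma G_le_norm_div (hε : 0 < ε) (hsub : ball 0 ε ⊆ tr Ω a) (v : V2) :
    G Ω a v ≤ ‖v‖ / ε := by
  have h := gauge_mono (absorbent_ball_zero hε) hsub v
  rwa [gauge_ball hε.le] at h

lemma G_comparison (hΩo : IsOpen Ω) (hΩc : Convex ℝ Ω) (hε : 0 < ε) (h2ε : closedBall a₀ (2*ε) ⊆ Ω)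
    (ha : a ∈ ball a₀ ε) (ha' : a' ∈ ball a₀ ε) (v : V2) :
    G Ω a' v ≤ (1 + ‖a - a'‖/ε) * G Ω a v := by
  rcases eq_or_ne a a' with rfl | hne
  · simp
  have haΩ : a ∈ Ω := h2ε (closedBall_subset_closedBall (by linarith) (ball_subset_closedBall ha))
  obtain ⟨δ, hδdef⟩ : ∃ δ : ℝ, δ = ‖a - a'‖ := ⟨_, rfl⟩
  have hδ : 0 < δ := by rw [hδdef, norm_pos_iff]; exact sub_ne_zero_of_ne hne
  obtain ⟨c, hcdef⟩ : ∃ c : ℝ, c = 1 + δ/ε := ⟨_, rfl⟩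
  have hde : 0 < δ/ε := by positivity
  have hc1 : 1 < c := by rw [hcdef]; linarith
  have hc0 : 0 < c := lt_trans one_pos hc1
  rw [← hδdef, ← hcdef]
  -- subset claim
  have hsub : (c⁻¹ • tr Ω a : Set V2) ⊆ tr Ω a' := by
    rintro z ⟨w, hw, rfl⟩
    have hm : a' + (ε/δ) • (a' - a) ∈ Ω := by
      refine h2ε ?_
      rw [mem_closedBall]
      calc dist (a' + (ε/δ) • (a' - a)) a₀
          ≤ dist (a' + (ε/δ) • (a' - a)) a' + dist a' a₀ := dist_triangle _ _ _
        _ ≤ ε + ε := by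
            refine add_le_add ?_ (mem_ball.1 ha').le
            rw [dist_eq_norm, add_sub_cancel_left, norm_smul, Real.norm_eq_abs,
              abs_of_pos (by positivity), norm_sub_rev, ← hδdef, div_mul_cancel₀ _ hδ.ne']
        _ = 2*ε := by ring
    have hkey : a' + c⁻¹ • w = c⁻¹ • (a + w) + (1 - c⁻¹) • (a' + (ε/δ) • (a' - a)) := by
      rw [hcdef]
      match_scalars <;> field_simp <;> ring
    have hnn : (0:ℝ) ≤ 1 - c⁻¹ := by
      have : c⁻¹ ≤ 1 := inv_le_one_of_one_le₀ hc1.le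
      linarith
    have hw' : a + w ∈ Ω := hw
    have hmem := hΩc hw' hm (le_of_lt (inv_pos.2 hc0)) hnn (by ring)
    show a' + c⁻¹ • w ∈ Ω
    rw [hkey]
    exact hmem
  have habs : Absorbent ℝ (c⁻¹ • tr Ω a : Set V2) := by
    refine absorbent_nhds_zero (IsOpen.mem_nhds ?_ ?_)
    · exact (tr_open hΩo a).smul₀ (inv_ne_zero hc0.ne')
    · exact ⟨0, tr_zero_mem haΩ, smul_zero _⟩
  have h1 := gauge_mono habs hsub v
  have h2 : gauge (c⁻¹ • tr Ω a : Set V2) v = c * gauge (tr Ω a) v := by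
    rw [gauge_smul_left_of_nonneg (by positivity : (0:ℝ) ≤ c⁻¹)]
    simp [inv_inv, smul_eq_mul]
  calc G Ω a' v ≤ gauge (c⁻¹ • tr Ω a : Set V2) v := h1
    _ = c * G Ω a v := h2

lemma G_lip_v (hΩo : IsOpen Ω) (hΩc : Convex ℝ Ω) (haΩ : a ∈ Ω) (hε : 0 < ε)
    (hsub : ball 0 ε ⊆ tr Ω a) (v v' : V2) :
    |G Ω a v - G Ω a v'| ≤ ‖v - v'‖ / ε := by
  have key : ∀ x y : V2, G Ω a x - G Ω a y ≤ ‖x - y‖ / ε := by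
    intro x y
    have h1 : G Ω a x ≤ G Ω a y + G Ω a (x - y) := by
      have := gauge_add_le (tr_convex hΩc a) (tr_absorbent hΩo haΩ) y (x - y)
      simpa [G] using this
    have h2 := G_le_norm_div hε hsub (x - y)
    linarith
  rw [abs_sub_le_iff]
  exact ⟨key v v', by simpa [norm_sub_rev] using key v' v⟩

lemma contG (hΩo : IsOpen Ω) (hΩb : Bornology.IsBounded Ω) (hΩc : Convex ℝ Ω) :
    ContinuousOn (fun z : V2 × V2 => G Ω z.1 z.2) (Ω ×ˢ univ) := by
  rintro ⟨a₀, v₀⟩ ⟨ha₀, -⟩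
  apply ContinuousAt.continuousWithinAt
  rw [Metric.continuousAt_iff]
  intro ε' hε'
  obtain ⟨ε, hε, h2ε⟩ : ∃ ε : ℝ, 0 < ε ∧ closedBall a₀ (2*ε) ⊆ Ω := by
    obtain ⟨r, hr, hball⟩ := Metric.isOpen_iff.1 hΩo a₀ ha₀
    refine ⟨r/3, by positivity, fun y hy => hball ?_⟩
    rw [mem_ball]
    have := mem_closedBall.1 hy
    linarith
  obtain ⟨K, hK, hK1, hK2⟩ : ∃ K : ℝ, 0 < K ∧ 1/ε ≤ K ∧ ‖v₀‖/(ε*ε) ≤ K := by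
    refine ⟨1/ε + ‖v₀‖/(ε*ε) + 1, by positivity, ?_, ?_⟩ <;>
      [skip; skip] <;> nlinarith [norm_nonneg v₀, sq_nonneg ε,
        div_nonneg (norm_nonneg v₀) (le_of_lt (mul_pos hε hε)),
        le_of_lt (one_div_pos.2 hε)]
  refine ⟨min (ε/2) (ε'/(2*K)), by positivity, ?_⟩
  rintro ⟨a, v⟩ hd
  rw [Prod.dist_eq, max_lt_iff] at hd
  obtain ⟨hd1, hd2⟩ := hd
  have hd1' : dist a a₀ < ε := lt_of_lt_of_le hd1 ((min_le_left _ _).trans (by linarith))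
  have haball : a ∈ ball a₀ ε := mem_ball.2 hd1'
  have ha₀ball : a₀ ∈ ball a₀ ε := mem_ball_self hε
  have hsub : ball 0 ε ⊆ tr Ω a := ball_subset_tr h2ε haball
  have hsub₀ : ball 0 ε ⊆ tr Ω a₀ := ball_subset_tr h2ε ha₀ball
  have haΩ : a ∈ Ω := h2ε (mem_closedBall.2 (by linarith [mem_ball.1 haball]))
  have e1 : |G Ω a v - G Ω a v₀| ≤ ‖v - v₀‖ / ε := G_lip_v hΩo hΩc haΩ hε hsub v v₀
  have hb₀ : G Ω a₀ v₀ ≤ ‖v₀‖ / ε := G_le_norm_div hε hsub₀ v₀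
  have hb : G Ω a v₀ ≤ ‖v₀‖ / ε := G_le_norm_div hε hsub v₀
  have e2 : |G Ω a v₀ - G Ω a₀ v₀| ≤ (‖a - a₀‖/ε) * (‖v₀‖/ε) := by
    have hnn : (0:ℝ) ≤ ‖a - a₀‖/ε := by positivity
    have hnn' : (0:ℝ) ≤ ‖a₀ - a‖/ε := by positivity
    rw [abs_sub_le_iff]
    constructor
    · have h := G_comparison hΩo hΩc hε h2ε ha₀ball haball v₀
      calc G Ω a v₀ - G Ω a₀ v₀ ≤ (1 + ‖a₀ - a‖/ε) * G Ω a₀ v₀ - G Ω a₀ v₀ := by linarith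
        _ = (‖a₀ - a‖/ε) * G Ω a₀ v₀ := by ring
        _ ≤ (‖a₀ - a‖/ε) * (‖v₀‖/ε) := mul_le_mul_of_nonneg_left hb₀ hnn'
        _ = (‖a - a₀‖/ε) * (‖v₀‖/ε) := by rw [norm_sub_rev]
    · have h := G_comparison hΩo hΩc hε h2ε haball ha₀ball v₀
      calc G Ω a₀ v₀ - G Ω a v₀ ≤ (1 + ‖a - a₀‖/ε) * G Ω a v₀ - G Ω a v₀ := by linarith
        _ = (‖a - a₀‖/ε) * G Ω a v₀ := by ring
        _ ≤ (‖a - a₀‖/ε) * (‖v₀‖/ε) := mul_le_mul_of_nonneg_left hb hnn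
  have hdist : dist (G Ω a v) (G Ω a₀ v₀) ≤ ‖v - v₀‖/ε + (‖a - a₀‖/ε) * (‖v₀‖/ε) := by
    rw [Real.dist_eq]
    calc |G Ω a v - G Ω a₀ v₀| ≤ |G Ω a v - G Ω a v₀| + |G Ω a v₀ - G Ω a₀ v₀| :=
          abs_sub_le _ _ _
      _ ≤ _ := add_le_add e1 e2
  have hva : ‖v - v₀‖ < ε'/(2*K) := by
    rw [← dist_eq_norm]; exact lt_of_lt_of_le hd2 (min_le_right _ _)
  have haa : ‖a - a₀‖ < ε'/(2*K) := by
    rw [← dist_eq_norm]; exact lt_of_lt_of_le hd1 (min_le_right _ _)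
  have final : ‖v - v₀‖/ε + (‖a - a₀‖/ε) * (‖v₀‖/ε) < ε' := by
    have h1 : ‖v - v₀‖/ε ≤ ‖v - v₀‖ * K := by
      rw [div_eq_mul_one_div]
      exact mul_le_mul_of_nonneg_left hK1 (norm_nonneg _)
    have h2 : (‖a - a₀‖/ε) * (‖v₀‖/ε) ≤ ‖a - a₀‖ * K := by
      have : (‖a - a₀‖/ε) * (‖v₀‖/ε) = ‖a - a₀‖ * (‖v₀‖/(ε*ε)) := by ring
      rw [this]
      exact mul_le_mul_of_nonneg_left hK2 (norm_nonneg _)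
    have h3 : ‖v - v₀‖ * K < ε'/2 := by
      calc ‖v - v₀‖ * K < (ε'/(2*K)) * K := mul_lt_mul_of_pos_right hva hK
        _ = ε'/2 := by field_simp
    have h4 : ‖a - a₀‖ * K < ε'/2 := by
      calc ‖a - a₀‖ * K < (ε'/(2*K)) * K := mul_lt_mul_of_pos_right haa hK
        _ = ε'/2 := by field_simp
    linarith
  exact lt_of_le_of_lt hdist final

lemma F_self : F Ω a a = 0 := by
  simp [F, G_zero, sub_self]

lemma openSegment_ray (h : a ∈ openSegment ℝ x b) :
    ∃ S : ℝ, 0 < S ∧ x = a + S • (a - b) := by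
  obtain ⟨t1, t2, h1, h2, hsum, heq⟩ := h
  refine ⟨t2/t1, by positivity, ?_⟩
  have key : t1 • x = t1 • (a + (t2/t1) • (a - b)) := by
    have : t1 • (a + (t2/t1) • (a - b)) = (t1 + t2) • a - t2 • b := by
      match_scalars <;> field_simp <;> ring
    rw [this, hsum, one_smul, ← heq]
    module
  exact smul_right_injective V2 h1.ne' key

lemma openSegment_ray' (h : b ∈ openSegment ℝ a y) :
    ∃ T : ℝ, 1 < T ∧ y = a + T • (b - a) := by
  obtain ⟨t1, t2, h1, h2, hsum, heq⟩ := h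
  have ht2 : t2 < 1 := by linarith
  refine ⟨t2⁻¹, (one_lt_inv₀ h2).2 ht2, ?_⟩
  have key : t2 • y = t2 • (a + t2⁻¹ • (b - a)) := by
    have : t2 • (a + t2⁻¹ • (b - a)) = b - t1 • a := by
      have h1' : t1 = 1 - t2 := by linarith
      rw [h1']
      match_scalars <;> field_simp <;> ring
    rw [this, ← heq]
    module
  exact smul_right_injective V2 h2.ne' key

lemma frontier_ray_eq (hΩo : IsOpen Ω) (hΩc : Convex ℝ Ω) (ha : a ∈ Ω) {S : ℝ} (hS : 0 < S)
    (hf : a + S • v ∈ frontier Ω) : S = (G Ω a v)⁻¹ :=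
  eq_inv_of_mul_eq_one_left ((ray_frontier hΩo hΩc ha hS).1 hf)

lemma hilbertDist_eq (hΩo : IsOpen Ω) (hΩb : Bornology.IsBounded Ω) (hΩc : Convex ℝ Ω)
    (ha : a ∈ Ω) (hb : b ∈ Ω) : hilbertDist Ω a b = F Ω a b := by
  rcases eq_or_ne a b with rfl | hab
  · rw [F_self, hilbertDist, dif_neg]
    rintro ⟨x, y, hx, -, hax, -⟩
    have hxa : x = a := right_mem_openSegment_iff.1 hax
    rw [hxa] at hx
    exact hx.2 (by rwa [hΩo.interior_eq])
  · have hvab : a - b ≠ 0 := sub_ne_zero_of_ne hab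
    have hvba : b - a ≠ 0 := sub_ne_zero_of_ne hab.symm
    have hw0 : 0 < G Ω a (a - b) := G_pos hΩo hΩb ha hvab
    have hu0 : 0 < G Ω a (b - a) := G_pos hΩo hΩb ha hvba
    have hu1 : G Ω a (b - a) < 1 := G_lt_one hΩo (by rwa [add_sub_cancel])
    set u := G Ω a (b - a) with hu
    set w := G Ω a (a - b) with hwdef
    have hEx : ∃ x y : V2, x ∈ frontier Ω ∧ y ∈ frontier Ω ∧
        a ∈ openSegment ℝ x b ∧ b ∈ openSegment ℝ a y := by
      refine ⟨a + w⁻¹ • (a - b), a + u⁻¹ • (b - a), ?_, ?_, ?_, ?_⟩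
      · exact (ray_frontier hΩo hΩc ha (inv_pos.2 hw0)).2 (inv_mul_cancel₀ hw0.ne')
      · exact (ray_frontier hΩo hΩc ha (inv_pos.2 hu0)).2 (inv_mul_cancel₀ hu0.ne')
      · refine ⟨w/(w+1), 1/(w+1), by positivity, by positivity, by field_simp, ?_⟩
        match_scalars <;> field_simp <;> ring
      · refine ⟨1 - u, u, by linarith, hu0, by ring, ?_⟩
        match_scalars <;> field_simp <;> ring
    rw [hilbertDist, dif_pos hEx]
    obtain ⟨hx, hy, hax, hby⟩ := hEx.choose_spec.choose_spec
    set x := hEx.choose with hxdef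
    set y := hEx.choose_spec.choose with hydef
    obtain ⟨S, hS, hxeq⟩ := openSegment_ray hax
    obtain ⟨T, hT, hyeq⟩ := openSegment_ray' hby
    have hSw : S = w⁻¹ := frontier_ray_eq hΩo hΩc ha hS (hxeq ▸ hx)
    have hTu : T = u⁻¹ := frontier_ray_eq hΩo hΩc ha (lt_trans one_pos hT) (hyeq ▸ hy)
    have hnab : (0:ℝ) < ‖a - b‖ := norm_pos_iff.2 hvab
    have dxa : dist x a = S * ‖a - b‖ := by
      rw [dist_eq_norm, hxeq]
      have : a + S • (a - b) - a = S • (a - b) := by module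
      rw [this, norm_smul, Real.norm_eq_abs, abs_of_pos hS]
    have dxb : dist x b = (1 + S) * ‖a - b‖ := by
      rw [dist_eq_norm, hxeq]
      have : a + S • (a - b) - b = (1 + S) • (a - b) := by module
      rw [this, norm_smul, Real.norm_eq_abs, abs_of_pos (by linarith)]
    have dya : dist y a = T * ‖a - b‖ := by
      rw [dist_eq_norm, hyeq]
      have : a + T • (b - a) - a = T • (b - a) := by module
      rw [this, norm_smul, Real.norm_eq_abs, abs_of_pos (lt_trans one_pos hT), norm_sub_rev]
    have dyb : dist y b = (T - 1) * ‖a - b‖ := by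
      rw [dist_eq_norm, hyeq]
      have : a + T • (b - a) - b = (T - 1) • (b - a) := by module
      rw [this, norm_smul, Real.norm_eq_abs, abs_of_pos (by linarith), norm_sub_rev]
    rw [F, dxa, dxb, dya, dyb, hSw, hTu]
    congr 1
    congr 1
    have hui : 1 < u⁻¹ := (one_lt_inv₀ hu0).2 hu1
    have hY : w⁻¹ * ‖a - b‖ * ((u⁻¹ - 1) * ‖a - b‖) ≠ 0 :=
      ne_of_gt (mul_pos (mul_pos (inv_pos.2 hw0) hnab) (mul_pos (by linarith) hnab))
    have h1u : (0:ℝ) < 1 - u := by linarith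
    rw [div_eq_div_iff hY h1u.ne']
    field_simp
    ring

lemma F_pos (hΩo : IsOpen Ω) (hΩb : Bornology.IsBounded Ω) (ha : a ∈ Ω) (hb : b ∈ Ω)
    (hab : a ≠ b) : 0 < F Ω a b := by
  have hw0 : 0 < G Ω a (a - b) := G_pos hΩo hΩb ha (sub_ne_zero_of_ne hab)
  have hu0 : (0:ℝ) ≤ G Ω a (b - a) := gauge_nonneg _
  have hu1 : G Ω a (b - a) < 1 := G_lt_one hΩo (by rwa [add_sub_cancel])
  refine mul_pos (by norm_num) (Real.log_pos ?_)
  rw [lt_div_iff₀ (by linarith)]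
  linarith

lemma contF (hΩo : IsOpen Ω) (hΩb : Bornology.IsBounded Ω) (hΩc : Convex ℝ Ω) (hp : p ∈ Ω) :
    ContinuousOn (fun x => F Ω x p) Ω := by
  have hmap1 : Set.MapsTo (fun x : V2 => (x, x - p)) Ω (Ω ×ˢ univ) :=
    fun x hx => ⟨hx, mem_univ _⟩
  have hmap2 : Set.MapsTo (fun x : V2 => (x, p - x)) Ω (Ω ×ˢ univ) :=
    fun x hx => ⟨hx, mem_univ _⟩
  have h1' : ContinuousOn ((fun z : V2 × V2 => G Ω z.1 z.2) ∘ (fun x : V2 => (x, x - p))) Ω :=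
    ContinuousOn.comp (contG hΩo hΩb hΩc)
      ((continuous_id.prodMk (continuous_id.sub continuous_const)).continuousOn) hmap1
  have h2' : ContinuousOn ((fun z : V2 × V2 => G Ω z.1 z.2) ∘ (fun x : V2 => (x, p - x))) Ω :=
    ContinuousOn.comp (contG hΩo hΩb hΩc)
      ((continuous_id.prodMk (continuous_const.sub continuous_id)).continuousOn) hmap2
  have h1 : ContinuousOn (fun x => G Ω x (x - p)) Ω := by
    simpa [Function.comp_def] using h1'
  have h2 : ContinuousOn (fun x => G Ω x (p - x)) Ω := by
    simpa [Function.comp_def] using h2'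
  have hden : ∀ x ∈ Ω, 0 < 1 - G Ω x (p - x) := by
    intro x hx
    have := G_lt_one (a := x) (v := p - x) hΩo (by rwa [add_sub_cancel])
    linarith
  have hq : ContinuousOn (fun x => (1 + G Ω x (x - p)) / (1 - G Ω x (p - x))) Ω :=
    (continuousOn_const.add h1).div (continuousOn_const.sub h2)
      (fun x hx => (hden x hx).ne')
  refine continuousOn_const.mul (ContinuousOn.comp Real.continuousOn_log hq ?_)
  intro x hx
  have h1n : (0:ℝ) ≤ G Ω x (x - p) := gauge_nonneg _
  have : 0 < (1 + G Ω x (x - p)) / (1 - G Ω x (p - x)) :=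
    div_pos (by linarith) (hden x hx)
  exact this.ne'

end HB

/-- The Hilbert bisector of two distinct sites is closed in `Ω` and separates the sites. -/
theorem hilbert_bisector_closed_and_separates (Ω : Set V2) (hΩo : IsOpen Ω)
    (hΩb : Bornology.IsBounded Ω) (hΩc : Convex ℝ Ω)
    (p q : V2) (hp : p ∈ Ω) (hq : q ∈ Ω) (hpq : p ≠ q) :
    IsClosed {x : Ω | hilbertDist Ω x p = hilbertDist Ω x q} ∧
    connectedComponentIn (Ω \ {x | hilbertDist Ω x p = hilbertDist Ω x q}) p ≠
      connectedComponentIn (Ω \ {x | hilbertDist Ω x p = hilbertDist Ω x q}) q := by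
  have hDp : ∀ x ∈ Ω, hilbertDist Ω x p = HB.F Ω x p :=
    fun x hx => HB.hilbertDist_eq hΩo hΩb hΩc hx hp
  have hDq : ∀ x ∈ Ω, hilbertDist Ω x q = HB.F Ω x q :=
    fun x hx => HB.hilbertDist_eq hΩo hΩb hΩc hx hq
  have hcp : Continuous (fun x : Ω => HB.F Ω x p) :=
    (HB.contF hΩo hΩb hΩc hp).restrict
  have hcq : Continuous (fun x : Ω => HB.F Ω x q) :=
    (HB.contF hΩo hΩb hΩc hq).restrict
  constructor
  · have hset : {x : Ω | hilbertDist Ω x p = hilbertDist Ω x q} =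
        {x : Ω | HB.F Ω x p = HB.F Ω x q} := by
      ext x
      simp only [Set.mem_setOf_eq, hDp _ x.2, hDq _ x.2]
    rw [hset]
    exact isClosed_eq hcp hcq
  · intro hcomp
    set B := {x : V2 | hilbertDist Ω x p = hilbertDist Ω x q} with hBdef
    have hFpq : 0 < HB.F Ω p q := HB.F_pos hΩo hΩb hp hq hpq
    have hFqp : 0 < HB.F Ω q p := HB.F_pos hΩo hΩb hq hp hpq.symm
    have hpS : p ∈ Ω \ B := by
      refine ⟨hp, ?_⟩
      simp only [hBdef, Set.mem_setOf_eq, hDp p hp, hDq p hp, HB.F_self]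
      exact fun h => absurd h.symm hFpq.ne'
    have hqS : q ∈ Ω \ B := by
      refine ⟨hq, ?_⟩
      simp only [hBdef, Set.mem_setOf_eq, hDp q hq, hDq q hq, HB.F_self]
      exact fun h => absurd h hFqp.ne'
    have hp' : p ∈ connectedComponentIn (Ω \ B) p := mem_connectedComponentIn hpS
    have hq' : q ∈ connectedComponentIn (Ω \ B) p := by
      rw [hcomp]
      exact mem_connectedComponentIn hqS
    have hC : IsPreconnected (connectedComponentIn (Ω \ B) p) :=
      (isPreconnected_connectedComponentIn)
    have hCsub : connectedComponentIn (Ω \ B) p ⊆ Ω \ B := connectedComponentIn_subset _ _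
    have hCsubΩ : connectedComponentIn (Ω \ B) p ⊆ Ω :=
      hCsub.trans (Set.diff_subset)
    have hcont : ContinuousOn (fun x => HB.F Ω x p - HB.F Ω x q)
        (connectedComponentIn (Ω \ B) p) :=
      ((HB.contF hΩo hΩb hΩc hp).sub (HB.contF hΩo hΩb hΩc hq)).mono hCsubΩ
    have hiv := hC.intermediate_value hp' hq' hcont
    have h0 : (0:ℝ) ∈ Set.Icc (HB.F Ω p p - HB.F Ω p q) (HB.F Ω q p - HB.F Ω q q) := by
      rw [HB.F_self, HB.F_self]
      constructor <;> simp <;> linarith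
    obtain ⟨x, hxC, hx0⟩ := hiv h0
    have hxΩB := hCsub hxC
    refine hxΩB.2 ?_
    show hilbertDist Ω x p = hilbertDist Ω x q
    rw [hDp x hxΩB.1, hDq x hxΩB.1]
    linarith [show HB.F Ω x p - HB.F Ω x q = 0 from hx0]
end
end

section
/- For the Funk weak metric on an open bounded convex Ω, forward balls are convex: for c ∈ Ω and r ≥ 0 the set {x ∈ Ω : F_Ω(c,x) ≤ r} is convex; indeed it equals the image of the closure of Ω under the homothety centered at c with ratio 1 − e^{−r}, intersected with Ω. -/
noncomputable section
open Classical

/-- The Funk weak metric on `Ω`: `F_Ω(p,q) = log (‖x−p‖/‖x−q‖)` where `x` is the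
point where the ray from `p` through `q` meets the frontier of `Ω`; `0` otherwise. -/
noncomputable def funkDist (Ω : Set V2) (p q : V2) : ℝ :=
  if h : ∃ x : V2, x ∈ frontier Ω ∧ q ∈ openSegment ℝ p x then
    Real.log (dist h.choose p / dist h.choose q)
  else 0

lemma frontier_notMem (Ω : Set V2) (hΩo : IsOpen Ω) {X : V2} (hX : X ∈ frontier Ω) :
    X ∉ Ω := by
  rw [hΩo.frontier_eq] at hX; exact hX.2

lemma frontier_ne (Ω : Set V2) (hΩo : IsOpen Ω) {X c : V2} (hX : X ∈ frontier Ω)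
    (hc : c ∈ Ω) : X ≠ c := by
  rintro rfl; exact frontier_notMem Ω hΩo hX hc

/-- The ray from `c` through `x` meets the frontier beyond `x`. -/
lemma ray_frontier (Ω : Set V2) (hΩo : IsOpen Ω) (hΩb : Bornology.IsBounded Ω)
    (hΩc : Convex ℝ Ω) {c x : V2} (hc : c ∈ Ω) (hx : x ∈ Ω) (hne : x ≠ c) :
    ∃ X, X ∈ frontier Ω ∧ x ∈ openSegment ℝ c X := by
  set d : V2 := x - c with hd
  have hd0 : d ≠ 0 := sub_ne_zero.mpr hne
  have hdpos : 0 < ‖d‖ := norm_pos_iff.mpr hd0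
  have hxcd : x = c + d := by simp [hd]
  set S : Set ℝ := {t | c + t • d ∈ Ω} with hSdef
  have h1 : (1:ℝ) ∈ S := by
    simp only [hSdef, Set.mem_setOf_eq, one_smul]
    rw [← hxcd]; exact hx
  obtain ⟨M, hM⟩ := hΩb.exists_norm_le
  have hbdd : BddAbove S := by
    refine ⟨(M + ‖c‖) / ‖d‖, fun t ht => ?_⟩
    have h1 : ‖c + t • d‖ ≤ M := hM _ ht
    have h2 : ‖t • d‖ ≤ ‖c + t • d‖ + ‖c‖ := by
      have := norm_sub_le (c + t • d) c
      simpa using this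
    have h3 : |t| * ‖d‖ ≤ M + ‖c‖ := by
      rw [← Real.norm_eq_abs, ← norm_smul]; linarith
    rw [le_div_iff₀ hdpos]
    calc t * ‖d‖ ≤ |t| * ‖d‖ := by
          have := le_abs_self t; nlinarith
      _ ≤ M + ‖c‖ := h3
  set T : ℝ := sSup S with hT
  have hT1 : 1 ≤ T := le_csSup hbdd h1
  have hT0 : 0 < T := by linarith
  -- T > 1 since Ω is open at x
  have hTgt : 1 < T := by
    obtain ⟨ε, hε, hball⟩ := Metric.isOpen_iff.mp hΩo x hx
    set δ : ℝ := ε / (2 * ‖d‖) with hδ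
    have hδpos : 0 < δ := by positivity
    have hmem : (1 + δ) ∈ S := by
      apply hball
      have : c + (1 + δ) • d = x + δ • d := by rw [hxcd]; module
      rw [Metric.mem_ball, this, dist_eq_norm]
      simp only [add_sub_cancel_left, norm_smul, Real.norm_eq_abs, abs_of_pos hδpos]
      have h2 : δ * ‖d‖ = ε / 2 := by rw [hδ]; field_simp
      linarith
    have := le_csSup hbdd hmem
    linarith
  -- the segment [0, T) is inside Ω
  have hseg : ∀ t : ℝ, 0 ≤ t → t < T → c + t • d ∈ Ω := by
    intro t ht0 htT
    obtain ⟨u, huS, htu⟩ := exists_lt_of_lt_csSup ⟨1, h1⟩ htT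
    have hu0 : 0 < u := lt_of_le_of_lt ht0 htu
    have key : c + t • d = (1 - t/u) • c + (t/u) • (c + u • d) := by
      match_scalars <;> field_simp <;> ring
    rw [key]
    exact hΩc hc huS (by rw [sub_nonneg]; exact (div_le_one hu0).2 htu.le)
      (by positivity) (by ring)
  set X : V2 := c + T • d with hX
  have hXclos : X ∈ closure Ω := by
    have hcont : Filter.Tendsto (fun t : ℝ => c + t • d)
        (nhdsWithin T (Set.Iio T)) (nhds X) := by
      have : Continuous (fun t : ℝ => c + t • d) :=
        continuous_const.add (continuous_id.smul continuous_const)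
      exact (this.tendsto T).mono_left nhdsWithin_le_nhds
    refine mem_closure_of_tendsto hcont ?_
    have h0T : Set.Ioo (0:ℝ) T ∈ nhdsWithin T (Set.Iio T) := by
      rw [← Set.Ioi_inter_Iio]
      exact Filter.inter_mem (mem_nhdsWithin_of_mem_nhds (Ioi_mem_nhds hT0))
        self_mem_nhdsWithin
    filter_upwards [h0T] with t ht using hseg t ht.1.le ht.2
  have hXnot : X ∉ Ω := by
    intro hXmem
    obtain ⟨ε, hε, hball⟩ := Metric.isOpen_iff.mp hΩo X hXmem
    set δ : ℝ := ε / (2 * ‖d‖) with hδ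
    have hδpos : 0 < δ := by positivity
    have hmem : (T + δ) ∈ S := by
      apply hball
      have : c + (T + δ) • d = X + δ • d := by rw [hX]; module
      rw [Metric.mem_ball, this, dist_eq_norm]
      simp only [add_sub_cancel_left, norm_smul, Real.norm_eq_abs, abs_of_pos hδpos]
      have h2 : δ * ‖d‖ = ε / 2 := by rw [hδ]; field_simp
      linarith
    have := le_csSup hbdd hmem
    linarith
  refine ⟨X, ?_, ?_⟩
  · rw [hΩo.frontier_eq]; exact ⟨hXclos, hXnot⟩
  · refine ⟨1 - 1/T, 1/T, ?_, by positivity, by ring, ?_⟩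
    · rw [sub_pos]; exact (div_lt_one hT0).2 hTgt
    · rw [hxcd, hX]; match_scalars <;> field_simp <;> ring

/-- Uniqueness of the frontier point on the ray. -/
lemma frontier_unique_s18 (Ω : Set V2) (hΩo : IsOpen Ω) (hΩc : Convex ℝ Ω)
    {c x X X' : V2} (hc : c ∈ Ω) (hne : x ≠ c)
    (hX : X ∈ frontier Ω) (hX' : X' ∈ frontier Ω)
    (hs : x ∈ openSegment ℝ c X) (hs' : x ∈ openSegment ℝ c X') : X = X' := by
  obtain ⟨a, b, ha, hb, hab, hxeq⟩ := hs
  obtain ⟨a', b', ha', hb', hab', hxeq'⟩ := hs'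
  have h1 : b • (X - c) = x - c := by rw [← hxeq]; match_scalars <;> linarith
  have h2 : b' • (X' - c) = x - c := by rw [← hxeq']; match_scalars <;> linarith
  have key : ∀ (Y Z : V2) (bY bZ : ℝ), 0 < bY → 0 < bZ →
      Y ∈ frontier Ω → Z ∈ frontier Ω →
      bY • (Y - c) = x - c → bZ • (Z - c) = x - c → bZ ≤ bY → Y = Z := by
    intro Y Z bY bZ hbY hbZ hYf hZf hYe hZe hle
    rcases eq_or_lt_of_le hle with heq | hlt
    · subst heq
      have : bZ • (Y - c) = bZ • (Z - c) := by rw [hYe, hZe]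
      have := smul_right_injective V2 hbZ.ne' this
      have : Y - c = Z - c := this
      linear_combination (norm := module) this
    · -- bZ < bY : then Y is strictly between c and Z, hence in Ω
      exfalso
      have hYseg : Y ∈ openSegment ℝ c Z := by
        refine ⟨1 - bZ/bY, bZ/bY, ?_, by positivity, by ring, ?_⟩
        · rw [sub_pos]; exact (div_lt_one hbY).2 hlt
        · have hYc : Y - c = (bZ/bY) • (Z - c) := by
            have h4 : (bY)⁻¹ • (bY • (Y - c)) = (bY)⁻¹ • (bZ • (Z - c)) := by
              rw [hYe, hZe]
            rw [smul_smul, smul_smul, inv_mul_cancel₀ hbY.ne', one_smul] at h4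
            rw [h4, div_eq_inv_mul]
          linear_combination (norm := module) -hYc
      have hYint : Y ∈ interior Ω :=
        hΩc.openSegment_interior_closure_subset_interior
          (by rwa [hΩo.interior_eq]) (frontier_subset_closure hZf) hYseg
      rw [hΩo.interior_eq] at hYint
      exact frontier_notMem Ω hΩo hYf hYint
  rcases le_total b b' with h | h
  · exact (key X' X b' b hb' hb hX' hX h2 h1 h).symm
  · exact key X X' b b' hb hb' hX hX' h1 h2 h

/-- Explicit formula for the Funk distance. -/
lemma funkDist_formula (Ω : Set V2) (hΩo : IsOpen Ω) (hΩc : Convex ℝ Ω)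
    {c x X : V2} (hc : c ∈ Ω) (hne : x ≠ c) (hX : X ∈ frontier Ω)
    {a b : ℝ} (ha : 0 < a) (hb : 0 < b) (hab : a + b = 1)
    (hxeq : a • c + b • X = x) :
    funkDist Ω c x = Real.log (1/a) := by
  have hseg : x ∈ openSegment ℝ c X := ⟨a, b, ha, hb, hab, hxeq⟩
  have hEx : ∃ X : V2, X ∈ frontier Ω ∧ x ∈ openSegment ℝ c X := ⟨X, hX, hseg⟩
  rw [funkDist, dif_pos hEx]
  obtain ⟨hXf', hseg'⟩ := hEx.choose_spec
  have hXX : hEx.choose = X :=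
    frontier_unique_s18 Ω hΩo hΩc hc hne hXf' hX hseg' hseg
  rw [hXX]
  have hXc : X ≠ c := frontier_ne Ω hΩo hX hc
  have h1 : dist X x = a * dist X c := by
    rw [dist_eq_norm, dist_eq_norm]
    have hXx : X - x = a • (X - c) := by
      rw [← hxeq]; match_scalars <;> linarith
    rw [hXx, norm_smul, Real.norm_eq_abs, abs_of_pos ha]
  rw [h1]
  have hXc0 : dist X c ≠ 0 := dist_ne_zero.mpr hXc
  congr 1
  field_simp

/-- Forward Funk balls are convex; indeed they are the image of the closure of `Ω` under
the homothety of center `c` and ratio `1 - e^{-r}`, intersected with `Ω`. -/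
theorem funk_forward_ball_convex (Ω : Set V2) (hΩo : IsOpen Ω)
    (hΩb : Bornology.IsBounded Ω) (hΩc : Convex ℝ Ω)
    (c : V2) (hc : c ∈ Ω) (r : ℝ) (hr : 0 ≤ r) :
    Convex ℝ {x ∈ Ω | funkDist Ω c x ≤ r} ∧
    {x ∈ Ω | funkDist Ω c x ≤ r} =
      ((fun y => c + (1 - Real.exp (-r)) • (y - c)) '' closure Ω) ∩ Ω := by
  set s : ℝ := 1 - Real.exp (-r) with hs
  have hexp : Real.exp (-r) ≤ 1 := by
    have := Real.exp_le_exp.mpr (neg_nonpos.mpr hr)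
    simpa using this
  have hexp0 : 0 < Real.exp (-r) := Real.exp_pos _
  have hs0 : 0 ≤ s := by rw [hs]; linarith
  have hs1 : s < 1 := by rw [hs]; linarith
  have hEq : {x ∈ Ω | funkDist Ω c x ≤ r} =
      ((fun y => c + s • (y - c)) '' closure Ω) ∩ Ω := by
    ext x
    constructor
    · rintro ⟨hx, hF⟩
      refine ⟨?_, hx⟩
      by_cases hxc : x = c
      · subst hxc
        exact ⟨x, subset_closure hx, by simp⟩
      · obtain ⟨X, hX, a, b, ha, hb, hab, hxeq⟩ :=
          ray_frontier Ω hΩo hΩb hΩc hc hx hxc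
        rw [funkDist_formula Ω hΩo hΩc hc hxc hX ha hb hab hxeq] at hF
        -- from log (1/a) ≤ r get exp (-r) ≤ a, i.e. b ≤ s
        have hloga : -r ≤ Real.log a := by
          rw [one_div, Real.log_inv] at hF; linarith
        have haexp : Real.exp (-r) ≤ a := by
          calc Real.exp (-r) ≤ Real.exp (Real.log a) := Real.exp_le_exp.mpr hloga
            _ = a := Real.exp_log ha
        have hbs : b ≤ s := by rw [hs]; linarith
        have hspos : 0 < s := lt_of_lt_of_le hb hbs
        refine ⟨c + (b/s) • (X - c), ?_, ?_⟩
        · have : c + (b/s) • (X - c) = (1 - b/s) • c + (b/s) • X := by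
            match_scalars <;> field_simp <;> ring
          rw [this]
          exact hΩc.closure (subset_closure hc) (frontier_subset_closure hX)
            (by rw [sub_nonneg]; exact (div_le_one hspos).2 hbs)
            (by positivity) (by ring)
        · show c + s • (c + (b/s) • (X - c) - c) = x
          have hx' : x = c + b • (X - c) := by
            rw [← hxeq]; match_scalars <;> linarith
          rw [hx']
          match_scalars <;> field_simp <;> ring
    · rintro ⟨⟨y, hy, hyx⟩, hx⟩
      refine ⟨hx, ?_⟩
      by_cases hxc : x = c
      · rw [hxc]
        have h0 : funkDist Ω c c = 0 := by
          rw [funkDist, dif_neg]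
          rintro ⟨X, hXf, a, b, ha, hb, hab, heq⟩
          have hb0 : b • (X - c) = (0 : V2) := by
            linear_combination (norm := module) heq - hab • (c : V2)
          have hX0 : X - c = 0 := by
            have h5 : b • (X - c) = b • (0:V2) := by rw [hb0, smul_zero]
            exact smul_right_injective V2 hb.ne' h5
          have hXeq : X = c := by rwa [sub_eq_zero] at hX0
          exact frontier_ne Ω hΩo hXf hc hXeq
        rw [h0]; exact hr
      · have hyxe : c + s • (y - c) = x := hyx
        have hspos : 0 < s := by
          rcases hs0.lt_or_eq with h | h
          · exact h
          · exfalso; apply hxc; rw [← hyxe, ← h, zero_smul, add_zero]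
        obtain ⟨X, hX, a, b, ha, hb, hab, hxeq⟩ :=
          ray_frontier Ω hΩo hΩb hΩc hc hx hxc
        rw [funkDist_formula Ω hΩo hΩc hc hxc hX ha hb hab hxeq]
        have hxc1 : b • (X - c) = x - c := by
          rw [← hxeq]; match_scalars <;> linarith
        have hxc2 : s • (y - c) = x - c := by
          rw [← hyxe]; match_scalars <;> ring
        -- b ≤ s
        have hbs : b ≤ s := by
          by_contra hcon
          push_neg at hcon
          -- X strictly between c and y, hence in Ω, contradiction
          have hXseg : X ∈ openSegment ℝ c y := by
            refine ⟨1 - s/b, s/b, ?_, by positivity, by ring, ?_⟩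
            · rw [sub_pos]; exact (div_lt_one hb).2 hcon
            · have hXc : X - c = (s/b) • (y - c) := by
                have h4 : (b)⁻¹ • (b • (X - c)) = (b)⁻¹ • (s • (y - c)) := by
                  rw [hxc1, hxc2]
                rw [smul_smul, smul_smul, inv_mul_cancel₀ hb.ne', one_smul] at h4
                rw [h4, div_eq_inv_mul]
              linear_combination (norm := module) -hXc
          have hXint : X ∈ interior Ω :=
            hΩc.openSegment_interior_closure_subset_interior
              (by rwa [hΩo.interior_eq]) hy hXseg
          rw [hΩo.interior_eq] at hXint
          exact frontier_notMem Ω hΩo hX hXint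
        -- conclude : log (1/a) ≤ r
        have haexp : Real.exp (-r) ≤ a := by
          have : 1 - s ≤ a := by linarith
          rw [hs] at this; linarith
        have hapos : (0:ℝ) < 1/a := by positivity
        rw [Real.log_le_iff_le_exp hapos]
        calc 1/a ≤ 1 / Real.exp (-r) := one_div_le_one_div_of_le hexp0 haexp
          _ = Real.exp r := by rw [one_div, ← Real.exp_neg, neg_neg]
  refine ⟨?_, hEq⟩
  rw [hEq]
  have himg : (fun y => c + s • (y - c)) '' closure Ω =
      (AffineMap.homothety c s) '' closure Ω := by
    apply Set.image_congr'
    intro y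
    simp [AffineMap.homothety_apply, add_comm]
  rw [himg]
  exact (hΩc.closure.affine_image _).inter hΩc
end
end
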